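/- arXiv:2409.14625 — 5 statements merged into one kernel-verified Lean document; each statement's English description precedes it below -/
import Mathlib

section
/- Let E be a Banach lattice. The set of order extreme points of the closed unit ball of E* is an absolutely James boundary of E, i.e., for every x in E there exists an order extreme point f of the unit ball of E* with |f|(|x|) = ||x||. -/
open Filter Topology NormedSpace

/-- `dAbs f x` represents `|f|(x)` for a functional `f` on a Banach lattice,
via the Riesz–Kantorovich formula `|f|(x) = sup { f y : |y| ≤ x }` (for `x ≥ 0`). -/
noncomputable def dAbs {E : Type*} [NormedAddCommGroup E] [Lattice E] [HasSolidNorm E] [IsOrderedAddMonoid E] [NormedSpace ℝ E]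
    (f : E →L[ℝ] ℝ) (x : E) : ℝ :=
  sSup (f '' {y | |y| ≤ x})

/-- A bounded operator between Banach lattices is positive. -/
def IsPosOp {E F : Type*} [NormedAddCommGroup E] [Lattice E] [HasSolidNorm E] [IsOrderedAddMonoid E] [NormedSpace ℝ E]
    [NormedAddCommGroup F] [Lattice F] [HasSolidNorm F] [IsOrderedAddMonoid F] [NormedSpace ℝ F] (T : E →L[ℝ] F) : Prop :=
  ∀ x : E, 0 ≤ x → 0 ≤ T x

/-- The order `T ≤ S` between operators: `T x ≤ S x` for all positive `x`. -/
def OpLe {E F : Type*} [NormedAddCommGroup E] [Lattice E] [HasSolidNorm E] [IsOrderedAddMonoid E] [NormedSpace ℝ E]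
    [NormedAddCommGroup F] [Lattice F] [HasSolidNorm F] [IsOrderedAddMonoid F] [NormedSpace ℝ F] (T S : E →L[ℝ] F) : Prop :=
  ∀ x : E, 0 ≤ x → T x ≤ S x

/-- `m` is the modulus `|T|` of a regular operator `T`: the least upper bound
of `T` and `-T` in the operator order. -/
def IsModulus {E F : Type*} [NormedAddCommGroup E] [Lattice E] [HasSolidNorm E] [IsOrderedAddMonoid E] [NormedSpace ℝ E]
    [NormedAddCommGroup F] [Lattice F] [HasSolidNorm F] [IsOrderedAddMonoid F] [NormedSpace ℝ F] (T m : E →L[ℝ] F) : Prop :=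
  OpLe T m ∧ OpLe (-T) m ∧ ∀ S : E →L[ℝ] F, OpLe T S → OpLe (-T) S → OpLe m S

/-- The order `f ≤ g` in the dual lattice: `f x ≤ g x` for all positive `x`. -/
def DualLe {E : Type*} [NormedAddCommGroup E] [Lattice E] [HasSolidNorm E] [IsOrderedAddMonoid E] [NormedSpace ℝ E]
    (f g : E →L[ℝ] ℝ) : Prop :=
  ∀ x : E, 0 ≤ x → f x ≤ g x


section Aux
variable {E : Type*} [NormedAddCommGroup E] [Lattice E] [HasSolidNorm E] [IsOrderedAddMonoid E] [NormedSpace ℝ E]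

/-- `a ⊓ (b + c) ≤ a ⊓ b + a ⊓ c` for nonnegative elements of a lattice group. -/
lemma aux_inf_add (a b c : E) (ha : 0 ≤ a) (hb : 0 ≤ b) (hc : 0 ≤ c) :
    a ⊓ (b + c) ≤ a ⊓ b + a ⊓ c := by
  have h0 : 0 ≤ a ⊓ c := le_inf ha hc
  have h1 : a ⊓ (b + c) - a ⊓ b = (a ⊓ (b + c) - a) ⊔ (a ⊓ (b + c) - b) := sub_inf ..
  have h2 : a ⊓ (b + c) - a ≤ a ⊓ c :=
    le_trans (sub_nonpos.mpr inf_le_left) h0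
  have h3 : a ⊓ (b + c) - b ≤ a ⊓ c := by
    refine le_inf ?_ ?_
    · calc a ⊓ (b + c) - b ≤ a - b := sub_le_sub_right inf_le_left _
        _ ≤ a := sub_le_self _ hb
    · exact sub_le_iff_le_add'.mpr inf_le_right
  have h4 := sup_le h2 h3
  rw [← h1] at h4
  exact sub_le_iff_le_add'.mp h4

lemma aux_inf_nsmul (a b : E) (ha : 0 ≤ a) (hb : 0 ≤ b) (n : ℕ) :
    a ⊓ (n • b) ≤ n • (a ⊓ b) := by
  induction n with
  | zero => simp [inf_eq_right.mpr ha]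
  | succ n ih =>
      have h1 : a ⊓ ((n + 1) • b) = a ⊓ (b + n • b) := by rw [succ_nsmul']
      calc a ⊓ ((n + 1) • b) ≤ a ⊓ b + a ⊓ (n • b) := by
              rw [h1]; exact aux_inf_add a b (n • b) ha hb (nsmul_nonneg hb n)
        _ ≤ a ⊓ b + n • (a ⊓ b) := add_le_add_right ih _
        _ = (n + 1) • (a ⊓ b) := (succ_nsmul' _ _).symm

lemma aux_nonneg_of_nsmul {n : ℕ} (hn : n ≠ 0) {y : E} (h : 0 ≤ n • y) : 0 ≤ y := by
  have hdec : n • y = n • y⁺ - n • y⁻ := by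
    rw [← smul_sub, posPart_sub_negPart]
  have h2 : n • y⁻ ≤ n • y⁺ := by
    rw [hdec] at h; exact sub_nonneg.mp h
  have h3 : y⁻ ≤ n • y⁺ := by
    obtain ⟨m, rfl⟩ := Nat.exists_eq_succ_of_ne_zero hn
    calc y⁻ ≤ (m + 1) • y⁻ := by
          rw [succ_nsmul']
          exact le_add_of_nonneg_right (nsmul_nonneg (negPart_nonneg y) m)
      _ ≤ (m + 1) • y⁺ := h2
  have h4 : y⁻ ≤ n • (y⁻ ⊓ y⁺) := by
    calc y⁻ = y⁻ ⊓ (n • y⁺) := (inf_eq_left.mpr h3).symm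
      _ ≤ n • (y⁻ ⊓ y⁺) := aux_inf_nsmul _ _ (negPart_nonneg y) (posPart_nonneg y) n
  rw [inf_comm, posPart_inf_negPart_eq_zero, smul_zero] at h4
  have h5 : y⁻ = 0 := le_antisymm h4 (negPart_nonneg y)
  have := posPart_sub_negPart y
  rw [h5, sub_zero] at this
  rw [← this]; exact posPart_nonneg y

lemma aux_smul_nonneg {c : ℝ} (hc : 0 ≤ c) {w : E} (hw : 0 ≤ w) : 0 ≤ c • w := by
  have hrat : ∀ q : ℚ, 0 ≤ q → 0 ≤ (q : ℝ) • w := by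
    intro q hq
    have hden : (q.den : ℕ) ≠ 0 := q.den_nz
    apply aux_nonneg_of_nsmul hden
    have h1 : (q.den : ℕ) • ((q : ℝ) • w) = ((q.den : ℝ) * (q : ℝ)) • w := by
      rw [← Nat.cast_smul_eq_nsmul ℝ q.den ((q : ℝ) • w), smul_smul]
    have h2 : (q.den : ℝ) * (q : ℝ) = (q.num : ℝ) := by
      rw [mul_comm]
      exact_mod_cast Rat.mul_den_eq_num q
    rw [h1, h2]
    have hnum : 0 ≤ q.num := Rat.num_nonneg.mpr hq
    obtain ⟨m, hm⟩ := Int.eq_ofNat_of_zero_le hnum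
    rw [hm]
    push_cast
    rw [Nat.cast_smul_eq_nsmul]
    exact nsmul_nonneg hw m
  -- now approximate c from above by rationals
  have hclosed : IsClosed {t : ℝ | 0 ≤ t • w} := by
    have : {t : ℝ | 0 ≤ t • w} = (fun t : ℝ => t • w) ⁻¹' (Set.Ici 0) := rfl
    rw [this]
    exact (isClosed_Ici).preimage (by continuity)
  have hseq : ∀ n : ℕ, ∃ q : ℚ, c < (q : ℝ) ∧ (q : ℝ) < c + 1 / (n + 1) := by
    intro n
    have : c < c + 1 / (n + 1) := by
      have : (0 : ℝ) < 1 / (n + 1) := by positivity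
      linarith
    exact_mod_cast exists_rat_btwn this
  choose q hq1 hq2 using hseq
  have htend : Tendsto (fun n : ℕ => ((q n : ℝ))) atTop (nhds c) := by
    have h1 : Tendsto (fun n : ℕ => c + 1 / ((n : ℝ) + 1)) atTop (nhds (c + 0)) :=
      tendsto_const_nhds.add (tendsto_one_div_add_atTop_nhds_zero_nat)
    rw [add_zero] at h1
    exact tendsto_of_tendsto_of_tendsto_of_le_of_le tendsto_const_nhds h1
      (fun n => (hq1 n).le) (fun n => (hq2 n).le)
  have hmem : ∀ n, ((q n : ℝ)) ∈ {t : ℝ | 0 ≤ t • w} := by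
    intro n
    exact hrat (q n) (by exact_mod_cast (hc.trans_lt (hq1 n)).le)
  have : c ∈ {t : ℝ | 0 ≤ t • w} :=
    hclosed.mem_of_tendsto htend (Eventually.of_forall hmem)
  exact this

lemma aux_smul_le_smul {c : ℝ} (hc : 0 ≤ c) {a b : E} (h : a ≤ b) : c • a ≤ c • b := by
  have := aux_smul_nonneg hc (sub_nonneg.mpr h)
  rw [smul_sub] at this
  exact sub_nonneg.mp this

lemma aux_posPart_smul {c : ℝ} (hc : 0 < c) (v : E) : (c • v)⁺ = c • v⁺ := by
  have key : ∀ (d : ℝ), 0 < d → ∀ w : E, (d • w)⁺ ≤ d • w⁺ := by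
    intro d hd w
    rw [posPart_def]
    refine sup_le ?_ ?_
    · exact aux_smul_le_smul hd.le (le_posPart w)
    · exact aux_smul_nonneg hd.le (posPart_nonneg w)
  refine le_antisymm (key c hc v) ?_
  have h2 := key c⁻¹ (by positivity) (c • v)
  rw [smul_smul, inv_mul_cancel₀ hc.ne', one_smul] at h2
  have h3 := aux_smul_le_smul hc.le h2
  rwa [smul_smul, mul_inv_cancel₀ hc.ne', one_smul] at h3

lemma aux_abs_of_nonneg {a : E} (ha : 0 ≤ a) : |a| = a := abs_of_nonneg ha

lemma aux_norm_le_of_le {a b : E} (h0 : 0 ≤ a) (h : a ≤ b) : ‖a‖ ≤ ‖b‖ := by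
  apply HasSolidNorm.solid
  rw [aux_abs_of_nonneg h0, aux_abs_of_nonneg (h0.trans h)]
  exact h

lemma aux_norm_posPart_le (v : E) : ‖v⁺‖ ≤ ‖v‖ := by
  apply HasSolidNorm.solid
  rw [aux_abs_of_nonneg (posPart_nonneg v)]
  rw [← posPart_add_negPart v]
  exact le_add_of_nonneg_right (negPart_nonneg v)

end Aux

section PosFun
set_option linter.unusedSectionVars false
variable {E : Type*} [NormedAddCommGroup E] [Lattice E] [HasSolidNorm E] [IsOrderedAddMonoid E] [NormedSpace ℝ E]

/-- The value of the positive part of `g` on a positive vector `v`: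
`sup { g y : 0 ≤ y ≤ v }`. -/
noncomputable def posFun (g : E →L[ℝ] ℝ) (v : E) : ℝ :=
  sSup (g '' {y | 0 ≤ y ∧ y ≤ v})

variable (g : E →L[ℝ] ℝ)

lemma posFun_bdd {v : E} (hv : 0 ≤ v) :
    ∀ r ∈ g '' {y | 0 ≤ y ∧ y ≤ v}, r ≤ ‖g‖ * ‖v‖ := by
  rintro r ⟨y, ⟨hy0, hyv⟩, rfl⟩
  calc g y ≤ |g y| := le_abs_self _
    _ ≤ ‖g‖ * ‖y‖ := g.le_opNorm y
    _ ≤ ‖g‖ * ‖v‖ := by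
        have := aux_norm_le_of_le hy0 hyv
        exact mul_le_mul_of_nonneg_left this (norm_nonneg g)

lemma posFun_bddAbove {v : E} (hv : 0 ≤ v) :
    BddAbove (g '' {y | 0 ≤ y ∧ y ≤ v}) :=
  ⟨‖g‖ * ‖v‖, fun r hr => posFun_bdd g hv r hr⟩

lemma posFun_mem_ne {v : E} (hv : 0 ≤ v) :
    (g '' {y | 0 ≤ y ∧ y ≤ v}).Nonempty :=
  ⟨g 0, ⟨0, ⟨le_rfl, hv⟩, rfl⟩⟩

lemma le_posFun_of_mem {v : E} (hv : 0 ≤ v) {y : E} (hy0 : 0 ≤ y) (hyv : y ≤ v) :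
    g y ≤ posFun g v :=
  le_csSup (posFun_bddAbove g hv) ⟨y, ⟨hy0, hyv⟩, rfl⟩

lemma posFun_nonneg {v : E} (hv : 0 ≤ v) : 0 ≤ posFun g v := by
  have := le_posFun_of_mem g hv (le_refl (0 : E)) hv
  rwa [map_zero] at this

lemma le_posFun {v : E} (hv : 0 ≤ v) : g v ≤ posFun g v :=
  le_posFun_of_mem g hv hv le_rfl

lemma posFun_le {v : E} (hv : 0 ≤ v) : posFun g v ≤ ‖g‖ * ‖v‖ :=
  csSup_le (posFun_mem_ne g hv) (posFun_bdd g hv)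

lemma posFun_zero : posFun g 0 = 0 := by
  have h := posFun_le g (le_refl (0 : E))
  have h2 := posFun_nonneg g (le_refl (0 : E))
  rw [norm_zero, mul_zero] at h
  linarith

lemma posFun_add {u v : E} (hu : 0 ≤ u) (hv : 0 ≤ v) :
    posFun g (u + v) = posFun g u + posFun g v := by
  have huv : 0 ≤ u + v := add_nonneg hu hv
  refine le_antisymm ?_ ?_
  · refine csSup_le (posFun_mem_ne g huv) ?_
    rintro r ⟨y, ⟨hy0, hyuv⟩, rfl⟩
    set y₁ := y ⊓ u with hy₁
    set y₂ := y - y₁ with hy₂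
    have hy₁0 : 0 ≤ y₁ := le_inf hy0 hu
    have hy₁u : y₁ ≤ u := inf_le_right
    have hy₂0 : 0 ≤ y₂ := sub_nonneg.mpr inf_le_left
    have hy₂v : y₂ ≤ v := by
      have h1 : y - y ⊓ u = (y - y) ⊔ (y - u) := sub_inf ..
      rw [hy₂, hy₁, h1, sub_self]
      exact sup_le hv (sub_le_iff_le_add'.mpr hyuv)
    have hsum : y = y₁ + y₂ := by rw [hy₂]; abel
    calc g y = g y₁ + g y₂ := by rw [hsum, map_add]
      _ ≤ posFun g u + posFun g v :=
          add_le_add (le_posFun_of_mem g hu hy₁0 hy₁u) (le_posFun_of_mem g hv hy₂0 hy₂v)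
  · rw [← sub_nonneg]
    have h1 : posFun g u ≤ posFun g (u + v) - posFun g v := by
      refine csSup_le (posFun_mem_ne g hu) ?_
      rintro a ⟨y₁, ⟨hy₁0, hy₁u⟩, rfl⟩
      rw [le_sub_iff_add_le]
      have h2 : posFun g v ≤ posFun g (u + v) - g y₁ := by
        refine csSup_le (posFun_mem_ne g hv) ?_
        rintro b ⟨y₂, ⟨hy₂0, hy₂v⟩, rfl⟩
        rw [le_sub_iff_add_le, ← map_add]
        refine le_posFun_of_mem g huv (add_nonneg hy₂0 hy₁0) ?_
        calc y₂ + y₁ ≤ v + u := add_le_add hy₂v hy₁u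
          _ = u + v := add_comm v u
      linarith
    linarith

lemma posFun_smul {c : ℝ} (hc : 0 ≤ c) {v : E} (hv : 0 ≤ v) :
    posFun g (c • v) = c * posFun g v := by
  rcases eq_or_lt_of_le hc with rfl | hc
  · rw [zero_smul, posFun_zero, zero_mul]
  · have hcv : 0 ≤ c • v := aux_smul_nonneg hc.le hv
    refine le_antisymm ?_ ?_
    · refine csSup_le (posFun_mem_ne g hcv) ?_
      rintro r ⟨y, ⟨hy0, hyv⟩, rfl⟩
      have hz0 : 0 ≤ c⁻¹ • y := aux_smul_nonneg (by positivity) hy0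
      have hzv : c⁻¹ • y ≤ v := by
        have := aux_smul_le_smul (c := c⁻¹) (by positivity) hyv
        rwa [smul_smul, inv_mul_cancel₀ hc.ne', one_smul] at this
      have : g y = c * g (c⁻¹ • y) := by
        rw [map_smul, smul_eq_mul, ← mul_assoc, mul_inv_cancel₀ hc.ne', one_mul]
      rw [this]
      exact mul_le_mul_of_nonneg_left (le_posFun_of_mem g hv hz0 hzv) hc.le
    · have h1 : posFun g v ≤ c⁻¹ * posFun g (c • v) := by
        refine csSup_le (posFun_mem_ne g hv) ?_
        rintro r ⟨z, ⟨hz0, hzv⟩, rfl⟩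
        have hcz0 : 0 ≤ c • z := aux_smul_nonneg hc.le hz0
        have hczv : c • z ≤ c • v := aux_smul_le_smul hc.le hzv
        have h2 : g z = c⁻¹ * g (c • z) := by
          rw [map_smul, smul_eq_mul, ← mul_assoc, inv_mul_cancel₀ hc.ne', one_mul]
        rw [h2]
        exact mul_le_mul_of_nonneg_left (le_posFun_of_mem g hcv hcz0 hczv) (by positivity)
      calc c * posFun g v ≤ c * (c⁻¹ * posFun g (c • v)) :=
            mul_le_mul_of_nonneg_left h1 hc.le
        _ = posFun g (c • v) := by field_simp

lemma posFun_balance {a b c d : E} (ha : 0 ≤ a) (hb : 0 ≤ b) (hc : 0 ≤ c) (hd : 0 ≤ d)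
    (h : a - b = c - d) : posFun g a - posFun g b = posFun g c - posFun g d := by
  have h1 : a + d = c + b := sub_eq_sub_iff_add_eq_add.mp h
  have h2 := posFun_add g ha hd
  have h3 := posFun_add g hc hb
  rw [h1] at h2
  rw [h2] at h3
  linarith

/-- The positive part of a functional, as a continuous linear map. -/
noncomputable def posCLM (g : E →L[ℝ] ℝ) : E →L[ℝ] ℝ :=
  LinearMap.mkContinuous
    { toFun := fun v => posFun g v⁺ - posFun g v⁻
      map_add' := by
        intro a b
        show posFun g (a + b)⁺ - posFun g (a + b)⁻ =
          (posFun g a⁺ - posFun g a⁻) + (posFun g b⁺ - posFun g b⁻)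
        have hkey : posFun g (a + b)⁺ - posFun g (a + b)⁻ =
            posFun g (a⁺ + b⁺) - posFun g (a⁻ + b⁻) := by
          apply posFun_balance g (posPart_nonneg _) (negPart_nonneg _)
            (add_nonneg (posPart_nonneg _) (posPart_nonneg _))
            (add_nonneg (negPart_nonneg _) (negPart_nonneg _))
          rw [posPart_sub_negPart]
          have h1 := posPart_sub_negPart a
          have h2 := posPart_sub_negPart b
          rw [show a⁺ + b⁺ - (a⁻ + b⁻) = (a⁺ - a⁻) + (b⁺ - b⁻) by abel, h1, h2]
        rw [hkey, posFun_add g (posPart_nonneg _) (posPart_nonneg _),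
          posFun_add g (negPart_nonneg _) (negPart_nonneg _)]
        ring
      map_smul' := by
        intro c v
        simp only [RingHom.id_apply, smul_eq_mul]
        rcases lt_trichotomy c 0 with hneg | rfl | hpos
        · have hd : (0:ℝ) < -c := by linarith
          have h1 : (c • v)⁺ = (-c) • v⁻ := by
            rw [show c • v = -((-c) • v) by rw [neg_smul, neg_neg], posPart_neg,
              show ((-c) • v)⁻ = (-c) • v⁻ by
                rw [← posPart_neg, ← smul_neg, aux_posPart_smul hd, posPart_neg]]
          have h2 : (c • v)⁻ = (-c) • v⁺ := by
            rw [← posPart_neg, show -(c • v) = (-c) • v by rw [neg_smul], aux_posPart_smul hd]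
          rw [h1, h2, posFun_smul g hd.le (negPart_nonneg v),
            posFun_smul g hd.le (posPart_nonneg v)]
          ring
        · rw [zero_smul, zero_mul]
          have h0 : (0 : E)⁺ = 0 := by simp
          have h0' : (0 : E)⁻ = 0 := by simp
          rw [h0, h0', posFun_zero, sub_zero]
        · rw [aux_posPart_smul hpos v,
            show (c • v)⁻ = c • v⁻ by
              rw [← posPart_neg, ← smul_neg, aux_posPart_smul hpos (-v), posPart_neg],
            posFun_smul g hpos.le (posPart_nonneg v), posFun_smul g hpos.le (negPart_nonneg v)]
          ring }
    ‖g‖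
    (by
      intro v
      simp only [LinearMap.coe_mk, AddHom.coe_mk]
      rw [Real.norm_eq_abs]
      have h1 : posFun g v⁺ ≤ ‖g‖ * ‖v‖ :=
        (posFun_le g (posPart_nonneg v)).trans
          (mul_le_mul_of_nonneg_left (aux_norm_posPart_le v) (norm_nonneg g))
      have h2 : posFun g v⁻ ≤ ‖g‖ * ‖v‖ := by
        refine (posFun_le g (negPart_nonneg v)).trans
          (mul_le_mul_of_nonneg_left ?_ (norm_nonneg g))
        rw [← posPart_neg, ← norm_neg v]
        exact aux_norm_posPart_le (-v)
      have h3 := posFun_nonneg g (posPart_nonneg v)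
      have h4 := posFun_nonneg g (negPart_nonneg v)
      rw [abs_le]
      constructor <;> linarith)

end PosFun

section PosCLM
set_option linter.unusedSectionVars false
variable {E : Type*} [NormedAddCommGroup E] [Lattice E] [HasSolidNorm E] [IsOrderedAddMonoid E] [NormedSpace ℝ E]
variable (g : E →L[ℝ] ℝ)

lemma posCLM_apply (v : E) : posCLM g v = posFun g v⁺ - posFun g v⁻ := rfl

lemma posCLM_apply_of_nonneg {v : E} (hv : 0 ≤ v) : posCLM g v = posFun g v := by
  rw [posCLM_apply, posPart_eq_self.mpr hv, negPart_eq_zero.mpr hv, posFun_zero, sub_zero]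

lemma posCLM_nonneg {v : E} (hv : 0 ≤ v) : 0 ≤ posCLM g v := by
  rw [posCLM_apply_of_nonneg g hv]; exact posFun_nonneg g hv

lemma le_posCLM {v : E} (hv : 0 ≤ v) : g v ≤ posCLM g v := by
  rw [posCLM_apply_of_nonneg g hv]; exact le_posFun g hv

lemma norm_posCLM_le : ‖posCLM g‖ ≤ ‖g‖ :=
  LinearMap.mkContinuous_norm_le _ (norm_nonneg g) _

lemma posFun_add_neg_le {v : E} (hv : 0 ≤ v) :
    posFun g v + posFun (-g) v ≤ ‖g‖ * ‖v‖ := by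
  have h1 : posFun g v ≤ ‖g‖ * ‖v‖ - posFun (-g) v := by
    refine csSup_le (posFun_mem_ne g hv) ?_
    rintro a ⟨y, ⟨hy0, hyv⟩, rfl⟩
    rw [le_sub_iff_add_le]
    have h2 : posFun (-g) v ≤ ‖g‖ * ‖v‖ - g y := by
      refine csSup_le (posFun_mem_ne (-g) hv) ?_
      rintro b ⟨z, ⟨hz0, hzv⟩, rfl⟩
      rw [le_sub_iff_add_le]
      have habs : |y - z| ≤ |v| := by
        rw [aux_abs_of_nonneg hv]
        rw [abs_le']
        constructor
        · calc y - z ≤ y := sub_le_self y hz0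
            _ ≤ v := hyv
        · rw [neg_sub]
          calc z - y ≤ z := sub_le_self z hy0
            _ ≤ v := hzv
      have heq : g y + (-g) z = g (y - z) := by
        simp only [ContinuousLinearMap.neg_apply, map_sub]; ring
      rw [add_comm ((-g) z) (g y), heq]
      calc g (y - z) ≤ |g (y - z)| := le_abs_self _
        _ ≤ ‖g‖ * ‖y - z‖ := g.le_opNorm _
        _ ≤ ‖g‖ * ‖v‖ :=
            mul_le_mul_of_nonneg_left (HasSolidNorm.solid habs) (norm_nonneg g)
    linarith
  linarith

lemma norm_posCLM_add_posCLM_neg_le : ‖posCLM g + posCLM (-g)‖ ≤ ‖g‖ := by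
  refine ContinuousLinearMap.opNorm_le_bound _ (norm_nonneg g) ?_
  intro v
  have hp : ∀ w : E, 0 ≤ w → (posCLM g + posCLM (-g)) w ≤ ‖g‖ * ‖v‖ → True := fun _ _ _ => trivial
  have happ : (posCLM g + posCLM (-g)) v =
      ((posCLM g + posCLM (-g)) v⁺) - ((posCLM g + posCLM (-g)) v⁻) := by
    rw [← map_sub, posPart_sub_negPart]
  have hb : ∀ w : E, 0 ≤ w → ‖w‖ ≤ ‖v‖ → (posCLM g + posCLM (-g)) w ≤ ‖g‖ * ‖v‖ := by
    intro w hw hwv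
    rw [ContinuousLinearMap.add_apply, posCLM_apply_of_nonneg g hw,
      posCLM_apply_of_nonneg (-g) hw]
    calc posFun g w + posFun (-g) w ≤ ‖g‖ * ‖w‖ := posFun_add_neg_le g hw
      _ ≤ ‖g‖ * ‖v‖ := mul_le_mul_of_nonneg_left hwv (norm_nonneg g)
  have h1 := hb v⁺ (posPart_nonneg v) (aux_norm_posPart_le v)
  have h2 := hb v⁻ (negPart_nonneg v) (by
    rw [← posPart_neg, ← norm_neg v]; exact aux_norm_posPart_le (-v))
  have h3 : 0 ≤ (posCLM g + posCLM (-g)) v⁺ := by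
    rw [ContinuousLinearMap.add_apply]
    exact add_nonneg (posCLM_nonneg g (posPart_nonneg v)) (posCLM_nonneg (-g) (posPart_nonneg v))
  have h4 : 0 ≤ (posCLM g + posCLM (-g)) v⁻ := by
    rw [ContinuousLinearMap.add_apply]
    exact add_nonneg (posCLM_nonneg g (negPart_nonneg v)) (posCLM_nonneg (-g) (negPart_nonneg v))
  rw [happ, Real.norm_eq_abs, abs_le]
  constructor <;> linarith

/-- If the positive part of `-g` vanishes, `g` equals its own positive part. -/
lemma eq_posCLM_of_neg_posCLM_eq_zero (h : posCLM (-g) = 0) : g = posCLM g := by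
  have key : ∀ v : E, 0 ≤ v → g v = posCLM g v := by
    intro v hv
    have h1 : posFun g v = g v + posFun (-g) v := by
      refine le_antisymm ?_ ?_
      · refine csSup_le (posFun_mem_ne g hv) ?_
        rintro a ⟨y, ⟨hy0, hyv⟩, rfl⟩
        have hmem : 0 ≤ v - y ∧ v - y ≤ v := ⟨sub_nonneg.mpr hyv, sub_le_self v hy0⟩
        have : g y = g v + (-g) (v - y) := by
          simp only [ContinuousLinearMap.neg_apply, map_sub]; ring
        rw [this]
        exact add_le_add_right (le_posFun_of_mem (-g) hv hmem.1 hmem.2) _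
      · rw [← le_sub_iff_add_le']
        refine csSup_le (posFun_mem_ne (-g) hv) ?_
        rintro b ⟨z, ⟨hz0, hzv⟩, rfl⟩
        rw [le_sub_iff_add_le, add_comm]
        have : g v + (-g) z = g (v - z) := by
          simp only [ContinuousLinearMap.neg_apply, map_sub]; ring
        rw [this]
        exact le_posFun_of_mem g hv (sub_nonneg.mpr hzv) (sub_le_self v hz0)
    have h2 : posFun (-g) v = 0 := by
      have := posCLM_apply_of_nonneg (-g) hv
      rw [h] at this
      simpa using this.symm
    rw [posCLM_apply_of_nonneg g hv, h1, h2, add_zero]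
  ext v
  have hv := posPart_sub_negPart v
  calc g v = g (v⁺ - v⁻) := by rw [hv]
    _ = g v⁺ - g v⁻ := map_sub g _ _
    _ = posCLM g v⁺ - posCLM g v⁻ := by
        rw [key v⁺ (posPart_nonneg v), key v⁻ (negPart_nonneg v)]
    _ = posCLM g (v⁺ - v⁻) := (map_sub (posCLM g) _ _).symm
    _ = posCLM g v := by rw [hv]

/-- Positive norm-one functional attaining its norm at a given positive vector. -/
lemma exists_positive_attaining (u : E) (hu : 0 ≤ u) :
    ∃ f : E →L[ℝ] ℝ, ‖f‖ ≤ 1 ∧ (∀ v : E, 0 ≤ v → 0 ≤ f v) ∧ f u = ‖u‖ := by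
  rcases eq_or_ne u 0 with rfl | hu0
  · exact ⟨0, by simp, fun v _ => le_rfl, by simp⟩
  · set N : E → ℝ := fun v => ‖v⁺‖ with hN
    have N_hom : ∀ c : ℝ, 0 < c → ∀ v : E, N (c • v) = c * N v := by
      intro c hc v
      show ‖(c • v)⁺‖ = c * ‖v⁺‖
      rw [aux_posPart_smul hc, norm_smul, Real.norm_eq_abs, abs_of_pos hc]
    have N_add : ∀ x y : E, N (x + y) ≤ N x + N y := by
      intro x y
      have h1 : (x + y)⁺ ≤ x⁺ + y⁺ := by
        rw [posPart_def]
        refine sup_le (add_le_add (le_posPart x) (le_posPart y))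
          (add_nonneg (posPart_nonneg x) (posPart_nonneg y))
      calc ‖(x + y)⁺‖ ≤ ‖x⁺ + y⁺‖ := aux_norm_le_of_le (posPart_nonneg _) h1
        _ ≤ ‖x⁺‖ + ‖y⁺‖ := norm_add_le _ _
    have hfle : ∀ z : (LinearPMap.mkSpanSingleton u ‖u‖ hu0 : E →ₗ.[ℝ] ℝ).domain,
        (LinearPMap.mkSpanSingleton u ‖u‖ hu0 : E →ₗ.[ℝ] ℝ) z ≤ N z := by
      intro z
      obtain ⟨c, hc⟩ := Submodule.mem_span_singleton.mp z.2
      have hz : z = ⟨c • u, Submodule.smul_mem _ c (Submodule.mem_span_singleton_self u)⟩ :=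
        Subtype.ext hc.symm
      rw [hz]
      have happ : (LinearPMap.mkSpanSingleton u ‖u‖ hu0 : E →ₗ.[ℝ] ℝ)
          ⟨c • u, Submodule.smul_mem _ c (Submodule.mem_span_singleton_self u)⟩ = c • ‖u‖ :=
        LinearPMap.mkSpanSingleton'_apply u ‖u‖ _ c _
      rw [happ]
      rcases le_or_gt 0 c with hc0 | hc0
      · show c • ‖u‖ ≤ ‖(c • u)⁺‖
        rw [posPart_eq_self.mpr (aux_smul_nonneg hc0 hu), norm_smul, Real.norm_eq_abs,
          abs_of_nonneg hc0, smul_eq_mul]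
      · have hle : c • ‖u‖ ≤ (0:ℝ) := by
          rw [smul_eq_mul]; exact mul_nonpos_of_nonpos_of_nonneg hc0.le (norm_nonneg u)
        exact hle.trans (norm_nonneg _)
    obtain ⟨gl, hgl1, hgl2⟩ :=
      exists_extension_of_le_sublinear (LinearPMap.mkSpanSingleton u ‖u‖ hu0) N N_hom N_add hfle
    have hbound : ∀ v : E, ‖gl v‖ ≤ 1 * ‖v‖ := by
      intro v
      rw [one_mul, Real.norm_eq_abs, abs_le]
      constructor
      · have h1 := hgl2 (-v)
        rw [map_neg] at h1
        have h2 : N (-v) ≤ ‖v‖ := by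
          show ‖(-v)⁺‖ ≤ ‖v‖
          calc ‖(-v)⁺‖ ≤ ‖-v‖ := aux_norm_posPart_le (-v)
            _ = ‖v‖ := norm_neg v
        linarith
      · exact (hgl2 v).trans (aux_norm_posPart_le v)
    refine ⟨LinearMap.mkContinuous gl 1 hbound,
      LinearMap.mkContinuous_norm_le _ zero_le_one _, ?_, ?_⟩
    · intro v hv
      have h1 := hgl2 (-v)
      rw [map_neg] at h1
      have h2 : N (-v) = 0 := by
        show ‖(-v)⁺‖ = (0:ℝ)
        rw [posPart_neg, negPart_eq_zero.mpr hv, norm_zero]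
      have h3 : -gl v ≤ 0 := by rw [← h2]; exact h1
      show (0:ℝ) ≤ gl v
      linarith
    · have happ : (LinearPMap.mkSpanSingleton u ‖u‖ hu0 : E →ₗ.[ℝ] ℝ)
          ⟨u, Submodule.mem_span_singleton_self u⟩ = ‖u‖ :=
        LinearPMap.mkSpanSingleton_apply ℝ ℝ hu0 ‖u‖
      have h5 := hgl1 ⟨u, Submodule.mem_span_singleton_self u⟩
      rw [happ] at h5
      exact h5

end PosCLM

section MainSec
set_option linter.unusedSectionVars false
variable {E : Type*} [NormedAddCommGroup E] [Lattice E] [HasSolidNorm E] [IsOrderedAddMonoid E] [NormedSpace ℝ E]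

/-- The set of positive norm-≤1 functionals attaining `‖u‖` at `u`, in the weak-* dual. -/
def KSet (u : E) : Set (WeakDual ℝ E) :=
  {f | ‖(WeakDual.toStrongDual f : E →L[ℝ] ℝ)‖ ≤ 1 ∧ (∀ v : E, 0 ≤ v → 0 ≤ f v) ∧
    f u = ‖u‖}

lemma mem_KSet_iff {u : E} (d : E →L[ℝ] ℝ) :
    StrongDual.toWeakDual d ∈ KSet u ↔
      (‖d‖ ≤ 1 ∧ (∀ v : E, 0 ≤ v → 0 ≤ d v) ∧ d u = ‖u‖) := Iff.rfl

lemma isClosed_KSet (u : E) : IsClosed (KSet u) := by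
  have hA : IsClosed {f : WeakDual ℝ E | ‖(WeakDual.toStrongDual f : E →L[ℝ] ℝ)‖ ≤ 1} := by
    have he : {f : WeakDual ℝ E | ‖(WeakDual.toStrongDual f : E →L[ℝ] ℝ)‖ ≤ 1}
        = WeakDual.toStrongDual ⁻¹' Metric.closedBall 0 1 := by
      ext f
      simp [Metric.mem_closedBall, dist_zero_right]
    rw [he]
    exact WeakDual.isClosed_closedBall 0 1
  have hB : IsClosed {f : WeakDual ℝ E | ∀ v : E, 0 ≤ v → 0 ≤ f v} := by
    have he : {f : WeakDual ℝ E | ∀ v : E, 0 ≤ v → 0 ≤ f v}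
        = ⋂ (v : E) (_ : 0 ≤ v), (fun f : WeakDual ℝ E => f v) ⁻¹' Set.Ici 0 := by
      ext f
      simp [Set.mem_iInter]
    rw [he]
    exact isClosed_iInter fun v => isClosed_iInter fun _ =>
      (isClosed_Ici).preimage (WeakDual.eval_continuous v)
  have hC : IsClosed {f : WeakDual ℝ E | f u = ‖u‖} :=
    isClosed_eq (WeakDual.eval_continuous u) continuous_const
  exact hA.inter (hB.inter hC)

lemma isCompact_KSet (u : E) : IsCompact (KSet u) := by
  refine (WeakDual.isCompact_closedBall (𝕜 := ℝ) (E := E) 0 1).of_isClosed_subset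
    (isClosed_KSet u) ?_
  intro f hf
  simp only [Set.mem_preimage, Metric.mem_closedBall, dist_zero_right]
  exact hf.1

/-- Family of closed, hereditary (face + upward closed) nonempty subsets of `KSet u`. -/
def SFam (u : E) : Set (Set (WeakDual ℝ E)) :=
  {C | C.Nonempty ∧ C ⊆ KSet u ∧ IsClosed C ∧
    (∀ f ∈ C, ∀ g ∈ KSet u, ∀ h ∈ KSet u, ∀ t : ℝ, 0 < t → t < 1 →
        f = t • g + (1 - t) • h → g ∈ C ∧ h ∈ C) ∧
    (∀ f ∈ C, ∀ h ∈ KSet u, (∀ v : E, 0 ≤ v → f v ≤ h v) → h ∈ C)}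

lemma exists_minimal_singleton (u : E) (hu : 0 ≤ u) (hne : (KSet u).Nonempty) :
    ∃ f₀ : WeakDual ℝ E, f₀ ∈ KSet u ∧
      (∀ g ∈ KSet u, ∀ h ∈ KSet u, ∀ t : ℝ, 0 < t → t < 1 →
        f₀ = t • g + (1 - t) • h → g = f₀ ∧ h = f₀) ∧
      (∀ h ∈ KSet u, (∀ v : E, 0 ≤ v → f₀ v ≤ h v) → h = f₀) := by
  have hKS : KSet u ∈ SFam u := by
    refine ⟨hne, le_refl _, isClosed_KSet u, ?_, ?_⟩
    · intro f _ g hg h hh t _ _ _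
      exact ⟨hg, hh⟩
    · intro f _ h hh _
      exact hh
  -- Zorn's lemma for minimal element
  have hH : ∀ c ⊆ SFam u, IsChain (· ⊆ ·) c → c.Nonempty →
      ∃ lb ∈ SFam u, ∀ s ∈ c, lb ⊆ s := by
    intro c hcS hchain hcne
    refine ⟨⋂₀ c, ⟨?_, ?_, ?_, ?_, ?_⟩, fun s hs => Set.sInter_subset_of_mem hs⟩
    · -- nonempty
      obtain ⟨s₀, hs₀⟩ := hcne
      have hds : Directed (fun (x y : Set (WeakDual ℝ E)) => x ⊇ y) (fun s : c => (s : Set _)) := by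
        rintro ⟨a, ha⟩ ⟨b, hb⟩
        rcases eq_or_ne a b with rfl | hab
        · exact ⟨⟨a, ha⟩, le_refl _, le_refl _⟩
        · rcases hchain ha hb hab with h | h
          · exact ⟨⟨a, ha⟩, le_refl _, h⟩
          · exact ⟨⟨b, hb⟩, h, le_refl _⟩
      have hcompact : ∀ s : c, IsCompact (s : Set (WeakDual ℝ E)) := fun s =>
        (isCompact_KSet u).of_isClosed_subset (hcS s.2).2.2.1 (hcS s.2).2.1
      have hnei : ∀ s : c, (s : Set (WeakDual ℝ E)).Nonempty := fun s => (hcS s.2).1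
      have hcl : ∀ s : c, IsClosed (s : Set (WeakDual ℝ E)) := fun s => (hcS s.2).2.2.1
      have : Nonempty c := ⟨⟨s₀, hs₀⟩⟩
      have hn := IsCompact.nonempty_iInter_of_directed_nonempty_isCompact_isClosed
        (fun s : c => (s : Set (WeakDual ℝ E))) hds hnei hcompact hcl
      rwa [Set.sInter_eq_iInter]
    · obtain ⟨s₀, hs₀⟩ := hcne
      exact (Set.sInter_subset_of_mem hs₀).trans (hcS hs₀).2.1
    · exact isClosed_sInter fun s hs => (hcS hs).2.2.1
    · intro f hf g hg h hh t ht0 ht1 heq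
      constructor <;> intro s hs
      · exact ((hcS hs).2.2.2.1 f (hf s hs) g hg h hh t ht0 ht1 heq).1
      · exact ((hcS hs).2.2.2.1 f (hf s hs) g hg h hh t ht0 ht1 heq).2
    · intro f hf h hh hle s hs
      exact (hcS hs).2.2.2.2 f (hf s hs) h hh hle
  obtain ⟨m, -, hmin⟩ := zorn_superset_nonempty (SFam u) hH (KSet u) hKS
  obtain ⟨hmS, hminimal⟩ := hmin
  obtain ⟨hmne, hmK, hmcl, hmface, hmup⟩ := hmS
  obtain ⟨f₀, hf₀⟩ := hmne
  -- on the minimal set, all evaluations at positive vectors are constant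
  have hconst : ∀ v : E, 0 ≤ v → ∀ f ∈ m, ∀ h ∈ m, f v = h v := by
    intro v hv
    set Cv : Set (WeakDual ℝ E) := {f | f ∈ m ∧ ∀ h ∈ m, h v ≤ f v} with hCv
    have hmcpt : IsCompact m := (isCompact_KSet u).of_isClosed_subset hmcl hmK
    obtain ⟨f₁, hf₁m, hf₁max⟩ :=
      hmcpt.exists_isMaxOn ⟨f₀, hf₀⟩ ((WeakDual.eval_continuous v).continuousOn)
    have hf₁max' : ∀ h ∈ m, h v ≤ f₁ v := fun h hh => hf₁max hh
    have hCvS : Cv ∈ SFam u := by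
      refine ⟨⟨f₁, hf₁m, hf₁max'⟩, fun f hf => hmK hf.1, ?_, ?_, ?_⟩
      · have he : Cv = m ∩ ⋂ (h : WeakDual ℝ E) (_ : h ∈ m),
            {f : WeakDual ℝ E | h v ≤ f v} := by
          ext f
          simp only [hCv, Set.mem_inter_iff, Set.mem_iInter, Set.mem_setOf_eq]
        rw [he]
        exact hmcl.inter (isClosed_iInter fun h => isClosed_iInter fun _ =>
          isClosed_le continuous_const (WeakDual.eval_continuous v))
      · intro f hf g hg h hh t ht0 ht1 heq
        obtain ⟨hgm, hhm⟩ := hmface f hf.1 g hg h hh t ht0 ht1 heq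
        have happ : f v = t * g v + (1 - t) * h v := by rw [heq]; rfl
        have h1 : g v ≤ f v := hf.2 g hgm
        have h2 : h v ≤ f v := hf.2 h hhm
        have hgv : g v = f v := by nlinarith
        have hhv : h v = f v := by nlinarith
        constructor
        · exact ⟨hgm, fun h' hh' => (hf.2 h' hh').trans_eq hgv.symm⟩
        · exact ⟨hhm, fun h' hh' => (hf.2 h' hh').trans_eq hhv.symm⟩
      · intro f hf h hh hle
        have hhm : h ∈ m := hmup f hf.1 h hh hle
        have hhv : h v = f v := le_antisymm (hf.2 h hhm) (hle v hv)
        exact ⟨hhm, fun h' hh' => (hf.2 h' hh').trans_eq hhv.symm⟩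
    have hsub : m ⊆ Cv := hminimal hCvS (fun f hf => hf.1)
    intro f hf h hh
    exact le_antisymm ((hsub hh).2 f hf) ((hsub hf).2 h hh)
  have hsingle : ∀ h ∈ m, h = f₀ := by
    intro h hh
    apply DFunLike.ext
    intro v
    have hv := posPart_sub_negPart v
    calc h v = h (v⁺ - v⁻) := by rw [hv]
      _ = h v⁺ - h v⁻ := by rw [map_sub]
      _ = f₀ v⁺ - f₀ v⁻ := by
          rw [hconst v⁺ (posPart_nonneg v) h hh f₀ hf₀,
            hconst v⁻ (negPart_nonneg v) h hh f₀ hf₀]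
      _ = f₀ (v⁺ - v⁻) := by rw [map_sub]
      _ = f₀ v := by rw [hv]
  refine ⟨f₀, hmK hf₀, ?_, ?_⟩
  · intro g hg h hh t ht0 ht1 heq
    obtain ⟨hgm, hhm⟩ := hmface f₀ hf₀ g hg h hh t ht0 ht1 heq
    exact ⟨hsingle g hgm, hsingle h hhm⟩
  · intro h hh hle
    exact hsingle h (hmup f₀ hf₀ h hh hle)

end MainSec

/-- The order extreme points of the dual unit ball form an absolutely James boundary:
for every `x` there is an order extreme point `f` of `B_{E*}` with `|f|(|x|) = ‖x‖`. -/
theorem orderExtremePoints_absolutelyJamesBoundary {E : Type*}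
    [NormedAddCommGroup E] [Lattice E] [HasSolidNorm E] [IsOrderedAddMonoid E] [NormedSpace ℝ E] [CompleteSpace E] (x : E) :
    ∃ f : E →L[ℝ] ℝ, ‖f‖ ≤ 1 ∧
      (∀ g₀ g₁ : E →L[ℝ] ℝ, ‖g₀‖ ≤ 1 → ‖g₁‖ ≤ 1 → ∀ t : ℝ, 0 < t → t < 1 →
        DualLe f (t • g₀ + (1 - t) • g₁) → g₀ = f ∧ g₁ = f) ∧
      dAbs f |x| = ‖x‖ := by
  set u : E := |x| with hu_def
  have hu : 0 ≤ u := abs_nonneg x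
  have hnorm : ‖u‖ = ‖x‖ := norm_abs_eq_norm x
  obtain ⟨f1, hf1n, hf1pos, hf1u⟩ := exists_positive_attaining u hu
  have hne : (KSet u).Nonempty :=
    ⟨StrongDual.toWeakDual f1, (mem_KSet_iff f1).mpr ⟨hf1n, hf1pos, hf1u⟩⟩
  obtain ⟨f₀, hf₀K, hface, hup⟩ := exists_minimal_singleton u hu hne
  set F : E →L[ℝ] ℝ := WeakDual.toStrongDual f₀ with hF_def
  have hFapp : ∀ v : E, F v = f₀ v := fun v => rfl
  have hFn : ‖F‖ ≤ 1 := hf₀K.1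
  have hFpos : ∀ v : E, 0 ≤ v → 0 ≤ F v := hf₀K.2.1
  have hFu : F u = ‖u‖ := hf₀K.2.2
  refine ⟨F, hFn, ?_, ?_⟩
  · intro g₀ g₁ hg₀n hg₁n t ht0 ht1 hle
    have ht1' : (0:ℝ) < 1 - t := by linarith
    have hb : ∀ g : E →L[ℝ] ℝ, ‖g‖ ≤ 1 → g u ≤ ‖u‖ := by
      intro g hgn
      calc g u ≤ |g u| := le_abs_self _
        _ ≤ ‖g‖ * ‖u‖ := g.le_opNorm u
        _ ≤ 1 * ‖u‖ := mul_le_mul_of_nonneg_right hgn (norm_nonneg u)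
        _ = ‖u‖ := one_mul _
    have hb₀ := hb g₀ hg₀n
    have hb₁ := hb g₁ hg₁n
    have hcomb : ‖u‖ ≤ t * g₀ u + (1 - t) * g₁ u := by
      have h1 := hle u hu
      rw [hFu] at h1
      simpa using h1
    have hg₀u : g₀ u = ‖u‖ := by
      by_contra hne'
      have hlt : g₀ u < ‖u‖ := lt_of_le_of_ne hb₀ hne'
      have h1 : t * g₀ u < t * ‖u‖ := mul_lt_mul_of_pos_left hlt ht0
      have h2 : (1 - t) * g₁ u ≤ (1 - t) * ‖u‖ := mul_le_mul_of_nonneg_left hb₁ ht1'.le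
      linarith
    have hg₁u : g₁ u = ‖u‖ := by
      by_contra hne'
      have hlt : g₁ u < ‖u‖ := lt_of_le_of_ne hb₁ hne'
      have h1 : (1 - t) * g₁ u < (1 - t) * ‖u‖ := mul_lt_mul_of_pos_left hlt ht1'
      have h2 : t * g₀ u ≤ t * ‖u‖ := mul_le_mul_of_nonneg_left hb₀ ht0.le
      linarith
    have hpK : ∀ g : E →L[ℝ] ℝ, ‖g‖ ≤ 1 → g u = ‖u‖ →
        (‖posCLM g‖ ≤ 1 ∧ (∀ v, 0 ≤ v → 0 ≤ posCLM g v) ∧ posCLM g u = ‖u‖) := by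
      intro g hgn hgu
      have hn : ‖posCLM g‖ ≤ 1 := (norm_posCLM_le g).trans hgn
      refine ⟨hn, fun v hv => posCLM_nonneg g hv, le_antisymm (hb _ hn) ?_⟩
      rw [← hgu]
      exact le_posCLM g hu
    obtain ⟨hp₀n, hp₀pos, hp₀u⟩ := hpK g₀ hg₀n hg₀u
    obtain ⟨hp₁n, hp₁pos, hp₁u⟩ := hpK g₁ hg₁n hg₁u
    have hp₀K : StrongDual.toWeakDual (posCLM g₀) ∈ KSet u :=
      (mem_KSet_iff _).mpr ⟨hp₀n, hp₀pos, hp₀u⟩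
    have hp₁K : StrongDual.toWeakDual (posCLM g₁) ∈ KSet u :=
      (mem_KSet_iff _).mpr ⟨hp₁n, hp₁pos, hp₁u⟩
    set hcl : E →L[ℝ] ℝ := t • posCLM g₀ + (1 - t) • posCLM g₁ with hcl_def
    have hclapp : ∀ v : E, hcl v = t * posCLM g₀ v + (1 - t) * posCLM g₁ v := by
      intro v
      rw [hcl_def]
      simp
    have hclK : StrongDual.toWeakDual hcl ∈ KSet u := by
      refine (mem_KSet_iff _).mpr ⟨?_, ?_, ?_⟩
      · have hs0 : ‖t • posCLM g₀‖ ≤ t * ‖posCLM g₀‖ := by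
          have h := _root_.norm_smul_le t (posCLM g₀)
          rwa [Real.norm_eq_abs, abs_of_pos ht0] at h
        have hs1 : ‖(1 - t) • posCLM g₁‖ ≤ (1 - t) * ‖posCLM g₁‖ := by
          have h := _root_.norm_smul_le (1 - t) (posCLM g₁)
          rwa [Real.norm_eq_abs, abs_of_pos ht1'] at h
        have hh0 : t * ‖posCLM g₀‖ ≤ t * 1 := mul_le_mul_of_nonneg_left hp₀n ht0.le
        have hh1 : (1 - t) * ‖posCLM g₁‖ ≤ (1 - t) * 1 := mul_le_mul_of_nonneg_left hp₁n ht1'.le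
        have hadd := norm_add_le (t • posCLM g₀) ((1 - t) • posCLM g₁)
        rw [hcl_def]
        linarith
      · intro v hv
        rw [hclapp v]
        exact add_nonneg (mul_nonneg ht0.le (hp₀pos v hv))
          (mul_nonneg ht1'.le (hp₁pos v hv))
      · rw [hclapp u, hp₀u, hp₁u]; ring
    have hclC : StrongDual.toWeakDual hcl = f₀ := by
      apply hup _ hclK
      intro v hv
      have h1 := hle v hv
      have h4 : (t • g₀ + (1 - t) • g₁) v = t * g₀ v + (1 - t) * g₁ v := by simp
      rw [h4] at h1
      have h5 : (StrongDual.toWeakDual hcl) v = hcl v := rfl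
      rw [h5, hclapp v, ← hFapp v]
      have h7 : t * g₀ v ≤ t * posCLM g₀ v :=
        mul_le_mul_of_nonneg_left (le_posCLM g₀ hv) ht0.le
      have h8 : (1 - t) * g₁ v ≤ (1 - t) * posCLM g₁ v :=
        mul_le_mul_of_nonneg_left (le_posCLM g₁ hv) ht1'.le
      linarith
    have hdecomp : f₀ = t • StrongDual.toWeakDual (posCLM g₀)
        + (1 - t) • StrongDual.toWeakDual (posCLM g₁) := by
      rw [← hclC]
      rfl
    obtain ⟨he₀, he₁⟩ := hface _ hp₀K _ hp₁K t ht0 ht1 hdecomp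
    have hp₀F : posCLM g₀ = F :=
      congrArg (fun w : WeakDual ℝ E => (WeakDual.toStrongDual w : E →L[ℝ] ℝ)) he₀
    have hp₁F : posCLM g₁ = F :=
      congrArg (fun w : WeakDual ℝ E => (WeakDual.toStrongDual w : E →L[ℝ] ℝ)) he₁
    have hmod : ∀ g : E →L[ℝ] ℝ, ‖g‖ ≤ 1 → posCLM g = F → g = F := by
      intro g hgn hgF
      have hmn : ‖posCLM g + posCLM (-g)‖ ≤ 1 := (norm_posCLM_add_posCLM_neg_le g).trans hgn
      have hmpos : ∀ v, 0 ≤ v → 0 ≤ (posCLM g + posCLM (-g)) v := by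
        intro v hv
        rw [ContinuousLinearMap.add_apply]
        exact add_nonneg (posCLM_nonneg g hv) (posCLM_nonneg (-g) hv)
      have hmu : (posCLM g + posCLM (-g)) u = ‖u‖ := by
        refine le_antisymm (hb _ hmn) ?_
        rw [ContinuousLinearMap.add_apply]
        have h1 : posCLM g u = ‖u‖ := by rw [hgF]; exact hFu
        rw [h1]
        exact le_add_of_nonneg_right (posCLM_nonneg (-g) hu)
      have hmK : StrongDual.toWeakDual (posCLM g + posCLM (-g)) ∈ KSet u :=
        (mem_KSet_iff _).mpr ⟨hmn, hmpos, hmu⟩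
      have hmC : StrongDual.toWeakDual (posCLM g + posCLM (-g)) = f₀ := by
        apply hup _ hmK
        intro v hv
        have h5 : (StrongDual.toWeakDual (posCLM g + posCLM (-g))) v
            = posCLM g v + posCLM (-g) v := rfl
        rw [h5, ← hFapp v, ← hgF]
        exact le_add_of_nonneg_right (posCLM_nonneg (-g) hv)
      have hmF : posCLM g + posCLM (-g) = F :=
        congrArg (fun w : WeakDual ℝ E => (WeakDual.toStrongDual w : E →L[ℝ] ℝ)) hmC
      have hzero : posCLM (-g) = 0 := by
        have h6 : posCLM g + posCLM (-g) = posCLM g + 0 := by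
          rw [add_zero, hmF, hgF]
        exact add_left_cancel h6
      calc g = posCLM g := eq_posCLM_of_neg_posCLM_eq_zero g hzero
        _ = F := hgF
    exact ⟨hmod g₀ hg₀n hp₀F, hmod g₁ hg₁n hp₁F⟩
  · have hgr : IsGreatest (F '' {y | |y| ≤ |x|}) (F u) := by
      constructor
      · exact ⟨u, by rw [hu_def]; exact le_of_eq (abs_abs x), rfl⟩
      · rintro r ⟨y, hy, rfl⟩
        have h1 : F y ≤ F |y| := by
          have h2 : 0 ≤ |y| - y := sub_nonneg.mpr (le_abs_self y)
          have h3 := hFpos _ h2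
          rw [map_sub] at h3
          linarith
        have h3 : F |y| ≤ F u := by
          have h4 : 0 ≤ u - |y| := sub_nonneg.mpr hy
          have h5 := hFpos _ h4
          rw [map_sub] at h5
          linarith
        exact h1.trans h3
    rw [dAbs, hgr.csSup_eq, hFu, hnorm]
end

section
/- Let E and F be Banach lattices with F Dedekind complete. If every positive operator T: E → F attains its norm, then the set B = { x ⊗ y* : x a positive norm-one element of E, y* a positive norm-one functional on F } is an absolutely James boundary of the space L^r(E;F) of regular operators with the regular norm; that is, for every T in L^r(E;F) with regular norm 1 there exists f in B with |f|(|T|) = 1. -/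
open Filter Topology NormedSpace

lemma nonneg_of_pow2_nsmul' {E : Type*} [NormedAddCommGroup E] [Lattice E] [HasSolidNorm E] [IsOrderedAddMonoid E]
    {n : ℕ} {w : E} (h : 0 ≤ 2 ^ n • w) : 0 ≤ w := by
  induction n generalizing w with
  | zero => simpa using h
  | succ n ih =>
    have : (2:ℕ) ^ (n+1) • w = 2 ^ n • (2 • w) := by rw [smul_smul]; ring_nf
    exact nsmul_two_semiclosed (ih (by rwa [this] at h))

lemma real_smul_nonneg' {E : Type*} [NormedAddCommGroup E] [Lattice E] [HasSolidNorm E] [IsOrderedAddMonoid E] [NormedSpace ℝ E]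
    {c : ℝ} (hc : 0 ≤ c) {z : E} (hz : 0 ≤ z) : 0 ≤ c • z := by
  have dyadic : ∀ k n : ℕ, 0 ≤ ((k : ℝ) / 2 ^ n) • z := by
    intro k n
    have h1 : 0 ≤ ((2:ℝ) ^ n)⁻¹ • z := by
      apply nonneg_of_pow2_nsmul' (n := n)
      have : (2:ℕ) ^ n • ((2:ℝ) ^ n)⁻¹ • z = z := by
        rw [← Nat.cast_smul_eq_nsmul ℝ, smul_smul]
        push_cast
        rw [mul_inv_cancel₀ (by positivity), one_smul]
      rw [this]; exact hz
    have : ((k : ℝ) / 2 ^ n) • z = k • (((2:ℝ) ^ n)⁻¹ • z) := by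
      rw [← Nat.cast_smul_eq_nsmul ℝ, smul_smul]; ring_nf
    rw [this]
    exact nsmul_nonneg h1 k
  have hcl : IsClosed {c : ℝ | 0 ≤ c • z} := by
    have : Continuous fun c : ℝ => c • z := by fun_prop
    exact isClosed_le continuous_const this
  have h2 : Tendsto (fun n : ℕ => ((2:ℝ) ^ n)⁻¹) atTop (nhds 0) :=
    tendsto_inv_atTop_zero.comp (tendsto_pow_atTop_atTop_of_one_lt one_lt_two)
  have hb : ∀ n : ℕ, |((⌊c * 2 ^ n⌋₊ : ℝ) / 2 ^ n) - c| ≤ ((2:ℝ) ^ n)⁻¹ := by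
    intro n
    have hp : (0:ℝ) < 2 ^ n := by positivity
    have hf : (⌊c * 2 ^ n⌋₊ : ℝ) ≤ c * 2 ^ n := Nat.floor_le (by positivity)
    have hf2 : c * 2 ^ n < (⌊c * 2 ^ n⌋₊ : ℝ) + 1 := Nat.lt_floor_add_one _
    rw [abs_sub_le_iff]
    refine ⟨?_, ?_⟩
    · have h3 : (⌊c * 2 ^ n⌋₊ : ℝ) / 2 ^ n ≤ c := (div_le_iff₀ hp).mpr hf
      linarith [inv_nonneg.mpr hp.le]
    · have h3 : c ≤ ((⌊c * 2 ^ n⌋₊ : ℝ) + 1) / 2 ^ n := (le_div_iff₀ hp).mpr hf2.le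
      have h4 : ((⌊c * 2 ^ n⌋₊ : ℝ) + 1) / 2 ^ n - (⌊c * 2 ^ n⌋₊ : ℝ) / 2 ^ n = (2 ^ n)⁻¹ := by
        field_simp
        ring
      linarith
  have htend : Tendsto (fun n : ℕ => ((⌊c * 2 ^ n⌋₊ : ℝ) / 2 ^ n)) atTop (nhds c) := by
    rw [tendsto_iff_dist_tendsto_zero]
    exact squeeze_zero (fun n => dist_nonneg) (fun n => by simpa [Real.dist_eq] using hb n) h2
  exact hcl.mem_of_tendsto htend (Eventually.of_forall fun n => dyadic _ n)

lemma real_smul_le_smul {E : Type*} [NormedAddCommGroup E] [Lattice E] [HasSolidNorm E] [IsOrderedAddMonoid E] [NormedSpace ℝ E]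
    {c : ℝ} (hc : 0 ≤ c) {a b : E} (hab : a ≤ b) : c • a ≤ c • b := by
  have := real_smul_nonneg' hc (sub_nonneg.mpr hab)
  rwa [smul_sub, sub_nonneg] at this

lemma real_smul_posPart {E : Type*} [NormedAddCommGroup E] [Lattice E] [HasSolidNorm E] [IsOrderedAddMonoid E] [NormedSpace ℝ E]
    {c : ℝ} (hc : 0 < c) (z : E) : (c • z)⁺ = c • z⁺ := by
  have h1 : (c • z)⁺ ≤ c • z⁺ := by
    refine sup_le ?_ ?_
    · exact real_smul_le_smul hc.le (le_posPart (a := z))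
    · exact real_smul_nonneg' hc.le (posPart_nonneg z)
  have h2 : c • z⁺ ≤ (c • z)⁺ := by
    have : z⁺ ≤ c⁻¹ • (c • z)⁺ := by
      refine sup_le ?_ ?_
      · have : c • z ≤ (c • z)⁺ := le_posPart (a := c • z)
        have := real_smul_le_smul (inv_nonneg.mpr hc.le) this
        rwa [smul_smul, inv_mul_cancel₀ hc.ne', one_smul] at this
      · exact real_smul_nonneg' (inv_nonneg.mpr hc.le) (posPart_nonneg _)
    have := real_smul_le_smul hc.le this
    rwa [smul_smul, mul_inv_cancel₀ hc.ne', one_smul] at this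
  exact le_antisymm h1 h2

/-- For a nonneg norm-one element `a` of a normed lattice group there is a positive
norm-one functional attaining its norm at `a`. -/
lemma exists_pos_functional {E : Type*} [NormedAddCommGroup E] [Lattice E] [HasSolidNorm E] [IsOrderedAddMonoid E] [NormedSpace ℝ E]
    {a : E} (ha : 0 ≤ a) (hna : ‖a‖ = 1) :
    ∃ y : E →L[ℝ] ℝ, (∀ z : E, 0 ≤ z → 0 ≤ y z) ∧ ‖y‖ = 1 ∧ y a = 1 := by
  set N : E → ℝ := fun z => ‖z⁺‖ with hN
  have hNa : N a = 1 := by rw [hN]; simp only [posPart_eq_self.mpr ha]; exact hna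
  have N_hom : ∀ c : ℝ, 0 < c → ∀ z, N (c • z) = c * N z := by
    intro c hc z
    rw [hN]
    simp only [real_smul_posPart hc, norm_smul, Real.norm_eq_abs, abs_of_pos hc]
  have N_add : ∀ z w : E, N (z + w) ≤ N z + N w := by
    intro z w
    have h1 : (z + w)⁺ ≤ z⁺ + w⁺ :=
      sup_le (add_le_add (le_posPart (a := z)) (le_posPart (a := w)))
        (add_nonneg (posPart_nonneg z) (posPart_nonneg w))
    calc ‖(z+w)⁺‖ ≤ ‖z⁺ + w⁺‖ := by
          apply norm_le_norm_of_abs_le_abs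
          rw [abs_of_nonneg (posPart_nonneg _),
            abs_of_nonneg (add_nonneg (posPart_nonneg z) (posPart_nonneg w))]
          exact h1
      _ ≤ ‖z⁺‖ + ‖w⁺‖ := norm_add_le _ _
  have haz : a ≠ 0 := by intro h; rw [h, norm_zero] at hna; norm_num at hna
  set f : E →ₗ.[ℝ] ℝ := LinearPMap.mkSpanSingleton a 1 haz with hf
  have hfle : ∀ x : f.domain, f x ≤ N x := by
    rintro ⟨v, hv⟩
    have hv' : v ∈ Submodule.span ℝ {a} := hv
    obtain ⟨c, rfl⟩ := Submodule.mem_span_singleton.mp hv'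
    have happ : f ⟨c • a, hv⟩ = c := by
      have h := LinearPMap.mkSpanSingleton'_apply a (1:ℝ) (fun c hc =>
        (smul_eq_zero.1 hc).elim (fun hc => by rw [hc]; simp) fun hx' => absurd hx' haz) c hv
      exact h.trans (by simp)
    rw [happ]
    rcases le_or_gt 0 c with hc | hc
    · have h1 : 0 ≤ c • a := real_smul_nonneg' hc ha
      show c ≤ N (c • a)
      rw [hN]
      show c ≤ ‖(c • a)⁺‖
      rw [posPart_eq_self.mpr h1, norm_smul, Real.norm_eq_abs, abs_of_nonneg hc, hna, mul_one]
    · have h1 : c • a ≤ 0 := by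
        have : 0 ≤ (-c) • a := real_smul_nonneg' (by linarith) ha
        have h0 : 0 ≤ -(c • a) := by rwa [neg_smul] at this
        exact neg_nonneg.mp h0
      show c ≤ ‖(c • a)⁺‖
      rw [posPart_eq_zero.mpr h1, norm_zero]
      linarith
  obtain ⟨g, hg_eq, hg_le⟩ := exists_extension_of_le_sublinear f N N_hom N_add hfle
  have hga : g a = 1 := by
    have hmem : a ∈ f.domain := by
      rw [hf, LinearPMap.mkSpanSingleton]
      exact Submodule.mem_span_singleton_self a
    have h2 := hg_eq ⟨a, hmem⟩
    rw [h2]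
    exact LinearPMap.mkSpanSingleton_apply ℝ ℝ haz 1
  have hNle : ∀ z : E, N z ≤ ‖z‖ := by
    intro z
    rw [hN]
    apply norm_le_norm_of_abs_le_abs
    rw [abs_of_nonneg (posPart_nonneg z)]
    exact sup_le (le_abs_self z) (abs_nonneg z)
  have hbound : ∀ z : E, |g z| ≤ ‖z‖ := by
    intro z
    rw [abs_le]
    constructor
    · have := (hg_le (-z)).trans (hNle (-z))
      rw [map_neg, norm_neg] at this
      linarith
    · exact (hg_le z).trans (hNle z)
  set y : E →L[ℝ] ℝ := LinearMap.mkContinuous g 1 (fun z => by simpa using hbound z) with hy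
  refine ⟨y, ?_, ?_, ?_⟩
  · intro z hz
    have hNz : N (-z) = 0 := by
      show ‖(-z)⁺‖ = 0
      rw [posPart_eq_zero.mpr (by simpa using hz), norm_zero]
    have h3 : g (-z) ≤ 0 := (hg_le (-z)).trans_eq hNz
    rw [map_neg] at h3
    show (0:ℝ) ≤ g z
    linarith
  · refine le_antisymm (LinearMap.mkContinuous_norm_le g zero_le_one _) ?_
    have h1 : y a = 1 := by simpa [hy, LinearMap.mkContinuous_apply] using hga
    have := y.le_opNorm a
    rw [h1, hna, mul_one] at this
    simpa using this
  · simpa [hy, LinearMap.mkContinuous_apply] using hga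


theorem tensor_absolutelyJamesBoundary' {E F : Type*}
    [NormedAddCommGroup E] [Lattice E] [HasSolidNorm E] [IsOrderedAddMonoid E] [NormedSpace ℝ E] [CompleteSpace E]
    [NormedAddCommGroup F] [Lattice F] [HasSolidNorm F] [IsOrderedAddMonoid F] [NormedSpace ℝ F] [CompleteSpace F]
    (hatt : ∀ T : E →L[ℝ] F, (∀ x : E, 0 ≤ x → 0 ≤ T x) → ∃ x : E, ‖x‖ = 1 ∧ ‖T x‖ = ‖T‖)
    (T m : E →L[ℝ] F)
    (hm1 : ∀ x : E, 0 ≤ x → T x ≤ m x) (hm2 : ∀ x : E, 0 ≤ x → (-T) x ≤ m x)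
    (hTr : ‖m‖ = 1) :
    ∃ (x : E) (y : F →L[ℝ] ℝ), 0 ≤ x ∧ ‖x‖ = 1 ∧
      (∀ z : F, 0 ≤ z → 0 ≤ y z) ∧ ‖y‖ = 1 ∧ y (m x) = 1 := by
  have hmp : ∀ x : E, 0 ≤ x → 0 ≤ m x := by
    intro x hx
    have h1 := hm1 x hx
    have h2 := hm2 x hx
    rw [ContinuousLinearMap.neg_apply] at h2
    have h3 : (0:F) ≤ 2 • m x := by
      rw [two_nsmul]
      calc (0:F) = T x + (-T x) := by abel
        _ ≤ m x + m x := add_le_add h1 h2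
    exact nsmul_two_semiclosed h3
  obtain ⟨x, hx1, hx2⟩ := hatt m hmp
  rw [hTr] at hx2
  have habs1 : m x ≤ m |x| := by
    have h := hmp (|x| - x) (sub_nonneg.mpr (le_abs_self x))
    rw [map_sub] at h
    exact sub_nonneg.mp h
  have habs2 : -(m x) ≤ m |x| := by
    have hge : (0:E) ≤ |x| + x := by
      have : -x ≤ |x| := neg_le_abs x
      calc (0:E) = -x + x := by abel
        _ ≤ |x| + x := add_le_add this le_rfl
    have h := hmp (|x| + x) hge
    rw [map_add] at h
    calc -(m x) = m |x| - (m |x| + m x) := by abel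
      _ ≤ m |x| - 0 := by
          apply sub_le_sub_left h
      _ = m |x| := sub_zero _
  have habs : |m x| ≤ m |x| := abs_le'.mpr ⟨habs1, habs2⟩
  have hnorm1 : ‖m |x|‖ = 1 := by
    have hle : ‖m |x|‖ ≤ 1 := by
      have := m.le_opNorm |x|
      rwa [hTr, norm_abs_eq_norm, hx1, one_mul] at this
    have hge : 1 ≤ ‖m |x|‖ := by
      have h4 : ‖m x‖ ≤ ‖m |x|‖ := by
        apply norm_le_norm_of_abs_le_abs
        rw [abs_of_nonneg (hmp |x| (abs_nonneg x))]
        exact habs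
      rw [hx2] at h4
      exact h4
    linarith
  obtain ⟨y, hy1, hy2, hy3⟩ := exists_pos_functional (hmp |x| (abs_nonneg x)) hnorm1
  exact ⟨|x|, y, abs_nonneg x, by rw [norm_abs_eq_norm, hx1], hy1, hy2, hy3⟩

/-- If every positive operator `E → F` (with `F` Dedekind complete) attains its norm, then the
set `{x ⊗ y* : x ∈ S_E⁺, y* ∈ S_{F*}⁺}` is an absolutely James boundary of `L^r(E;F)`:
for every `T` with regular norm `‖|T|‖ = 1` there is such a functional `f = x ⊗ y*` with
`|f|(|T|) = y*(|T| x) = 1`. -/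
theorem tensor_absolutelyJamesBoundary {E F : Type*}
    [NormedAddCommGroup E] [Lattice E] [HasSolidNorm E] [IsOrderedAddMonoid E] [NormedSpace ℝ E] [CompleteSpace E]
    [NormedAddCommGroup F] [Lattice F] [HasSolidNorm F] [IsOrderedAddMonoid F] [NormedSpace ℝ F] [CompleteSpace F]
    (hDed : ∀ A : Set F, A.Nonempty → BddAbove A → ∃ u : F, IsLUB A u)
    (hatt : ∀ T : E →L[ℝ] F, IsPosOp T → ∃ x : E, ‖x‖ = 1 ∧ ‖T x‖ = ‖T‖)
    (T m : E →L[ℝ] F) (hm : IsModulus T m) (hTr : ‖m‖ = 1) :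
    ∃ (x : E) (y : F →L[ℝ] ℝ), 0 ≤ x ∧ ‖x‖ = 1 ∧
      (∀ z : F, 0 ≤ z → 0 ≤ y z) ∧ ‖y‖ = 1 ∧ y (m x) = 1 := by
  exact tensor_absolutelyJamesBoundary' (fun S hS => hatt S hS) T m hm.1 hm.2.1 hTr
end

section
/- Let G be a Banach lattice with order continuous norm whose order is defined by a basis. Then there exists a sequence (S_n) of positive compact operators on G with regular norm at most 1 such that || |S_n − id_G|(x) || → 0 for every x in G. -/
open Filter Topology NormedSpace

/-- The norm of `G` is order continuous: every downward-directed set with infimum `0`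
contains elements of arbitrarily small norm. -/
def OrderContNorm (G : Type*) [NormedAddCommGroup G] [Lattice G] [HasSolidNorm G] [IsOrderedAddMonoid G] : Prop :=
  ∀ A : Set G, A.Nonempty → DirectedOn (· ≥ ·) A → IsGLB A 0 →
    ∀ ε : ℝ, 0 < ε → ∃ a ∈ A, ‖a‖ < ε

/-- The order of `G` is given coordinatewise by the Schauder basis `b` with
coordinate functionals `c`. -/
def OrderBasis {G : Type*} [NormedAddCommGroup G] [Lattice G] [HasSolidNorm G] [IsOrderedAddMonoid G] [NormedSpace ℝ G]
    (b : ℕ → G) (c : ℕ → G →L[ℝ] ℝ) : Prop :=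
  (∀ x : G, Filter.Tendsto (fun N => ∑ i ∈ Finset.range N, c i x • b i)
    Filter.atTop (nhds x)) ∧
  (∀ i j, c i (b j) = if i = j then (1 : ℝ) else 0) ∧
  (∀ x : G, 0 ≤ x ↔ ∀ n, 0 ≤ c n x)

/-- In a Banach lattice with order continuous norm whose order is given by a basis, there is
a sequence of positive compact operators `S_n` of regular norm at most `1` with
`‖|S_n - id|(x)‖ → 0` for every `x`. -/
theorem exists_seq_positive_compact_to_id {G : Type*}
    [NormedAddCommGroup G] [Lattice G] [HasSolidNorm G] [IsOrderedAddMonoid G] [NormedSpace ℝ G] [CompleteSpace G]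
    (hoc : OrderContNorm G)
    (b : ℕ → G) (c : ℕ → G →L[ℝ] ℝ) (hbc : OrderBasis b c) :
    ∃ S m : ℕ → G →L[ℝ] G,
      (∀ n, IsCompactOperator (S n) ∧ IsPosOp (S n) ∧ ‖S n‖ ≤ 1 ∧
        IsModulus (S n - ContinuousLinearMap.id ℝ G) (m n)) ∧
      ∀ x : G, Filter.Tendsto (fun n => ‖m n x‖) Filter.atTop (nhds 0) := by
  obtain ⟨hconv, hdual, hpos⟩ := hbc
  -- the partial-sum projections
  set P : ℕ → G →L[ℝ] G :=
    fun n => ∑ i ∈ Finset.range n, (c i).smulRight (b i) with hP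
  have hPapply : ∀ n x, P n x = ∑ i ∈ Finset.range n, c i x • b i := by
    intro n x
    simp [hP, ContinuousLinearMap.sum_apply]
  -- coordinates of `P n x`
  have hcoord : ∀ n j x, c j (P n x) = if j < n then c j x else 0 := by
    intro n j x
    rw [hPapply, map_sum]
    have : ∀ i ∈ Finset.range n, c j (c i x • b i) = if i = j then c j x else 0 := by
      intro i _
      rw [map_smul, hdual, smul_eq_mul]
      by_cases h : i = j
      · subst h; simp
      · rw [if_neg (fun hh : j = i => h hh.symm), if_neg h, mul_zero]
    rw [Finset.sum_congr rfl this, Finset.sum_ite_eq' (Finset.range n) j (fun _ => c j x)]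
    simp [Finset.mem_range]
  -- order implies coordinatewise order
  have hmono : ∀ (u v : G), u ≤ v → ∀ j, c j u ≤ c j v := by
    intro u v huv j
    have := (hpos (v - u)).mp (by simpa using huv) j
    simpa [map_sub, sub_nonneg] using this
  -- b i ≥ 0
  have hbnn : ∀ i, 0 ≤ b i := by
    intro i
    rw [hpos]
    intro n
    rw [hdual]
    split <;> norm_num
  -- coordinates of the lattice abs
  have habs : ∀ (x : G) (j : ℕ), c j |x| = |c j x| := by
    intro x j
    have h1 : x ≤ |x| := le_abs_self x
    have h2 : -x ≤ |x| := neg_le_abs x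
    have hub : |c j x| ≤ c j |x| := by
      have ha := hmono x |x| h1 j
      have hb := hmono (-x) |x| h2 j
      rw [map_neg] at hb
      rw [abs_le]
      constructor <;> linarith
    refine le_antisymm ?_ hub
    by_contra hlt
    push_neg at hlt
    set ε : ℝ := c j |x| - |c j x| with hε
    have hεpos : 0 < ε := by simp [hε]; linarith
    set u' : G := |x| - ε • b j with hu'
    have hu'coord : ∀ k, c k u' = c k |x| - if k = j then ε else 0 := by
      intro k
      rw [hu', map_sub, map_smul, hdual, smul_eq_mul]
      split <;> simp
    have hxle : x ≤ u' := by
      have : 0 ≤ u' - x := by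
        rw [hpos]
        intro k
        rw [map_sub, hu'coord]
        by_cases h : k = j
        · rw [if_pos h, hε, h]
          have : c j x ≤ |c j x| := le_abs_self _
          linarith
        · rw [if_neg h, sub_zero, sub_nonneg]
          exact hmono x |x| h1 k
      exact sub_nonneg.mp this
    have hnxle : -x ≤ u' := by
      have : 0 ≤ u' - (-x) := by
        rw [hpos]
        intro k
        rw [map_sub, hu'coord, map_neg]
        by_cases h : k = j
        · rw [if_pos h, hε, h]
          have : -(c j x) ≤ |c j x| := neg_le_abs _
          linarith
        · rw [if_neg h, sub_zero]
          have := hmono (-x) |x| h2 k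
          simp only [map_neg] at this
          linarith
      exact sub_nonneg.mp this
    have : |x| ≤ u' := abs_le'.mpr ⟨hxle, hnxle⟩
    have := hmono |x| u' this j
    rw [hu'coord j, if_pos rfl] at this
    linarith
  -- |P n x| ≤ |x|
  have hdom : ∀ n x, |P n x| ≤ |x| := by
    intro n x
    have : 0 ≤ |x| - |P n x| := by
      rw [hpos]
      intro k
      rw [map_sub, habs, habs, hcoord, sub_nonneg]
      split
      · exact le_refl _
      · simp [abs_nonneg]
    simpa using this
  -- positivity of P n
  have hPpos : ∀ n, IsPosOp (P n) := by
    intro n x hx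
    rw [hpos]
    intro k
    rw [hcoord]
    split
    · exact (hpos x).mp hx k
    · exact le_refl _
  -- norm bound
  have hPnorm : ∀ n, ‖P n‖ ≤ 1 := by
    intro n
    refine ContinuousLinearMap.opNorm_le_bound _ zero_le_one fun x => ?_
    rw [one_mul]
    exact norm_le_norm_of_abs_le_abs (hdom n x)
  -- compactness
  have hPcompact : ∀ n, IsCompactOperator (P n) := by
    intro n
    have : IsCompactOperator (fun x : G => ∑ i ∈ Finset.range n, c i x • b i) := by
      induction n with
      | zero => simp only [Finset.range_zero, Finset.sum_empty]; exact (isCompactOperator_zero : IsCompactOperator (0 : G → G))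
      | succ k ih =>
        have hrank1 : IsCompactOperator (fun x : G => c k x • b k) := by
          have hck : IsCompactOperator (c k : G → ℝ) := by
            refine ⟨Metric.closedBall 0 ‖c k‖, isCompact_closedBall _ _, ?_⟩
            have : Metric.ball (0 : G) 1 ⊆ (c k) ⁻¹' Metric.closedBall 0 ‖c k‖ := by
              intro x hx
              simp only [Set.mem_preimage, Metric.mem_closedBall, dist_zero_right] at *
              calc ‖c k x‖ ≤ ‖c k‖ * ‖x‖ := (c k).le_opNorm x
                _ ≤ ‖c k‖ * 1 := by
                    exact mul_le_mul_of_nonneg_left (mem_ball_zero_iff.mp hx).le (norm_nonneg _)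
                _ = ‖c k‖ := mul_one _
            exact Filter.mem_of_superset (Metric.ball_mem_nhds 0 one_pos) this
          exact hck.continuous_comp (continuous_id.smul continuous_const)
        have := ih.add hrank1
        simp only [Finset.sum_range_succ]; exact this
    have heq : ⇑(P n) = fun x : G => ∑ i ∈ Finset.range n, c i x • b i := by
      funext x; exact hPapply n x
    rwa [heq]
  -- the moduli
  refine ⟨P, fun n => ContinuousLinearMap.id ℝ G - P n, fun n => ⟨hPcompact n, hPpos n,
    hPnorm n, ?_, ?_, ?_⟩, ?_⟩
  · -- OpLe (P n - id) (id - P n)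
    intro x hx
    have h1 : P n x ≤ x := by
      have : 0 ≤ x - P n x := by
        rw [hpos]
        intro k
        rw [map_sub, hcoord, sub_nonneg]
        split
        · exact le_refl _
        · exact (hpos x).mp hx k
      simpa using this
    simp only [ContinuousLinearMap.sub_apply, ContinuousLinearMap.id_apply]
    have := sub_nonneg.mpr h1
    calc P n x - x = -(x - P n x) := (neg_sub _ _).symm
      _ ≤ x - P n x := neg_le_self this
  · -- OpLe (-(P n - id)) (id - P n)
    intro x _
    simp only [ContinuousLinearMap.neg_apply, ContinuousLinearMap.sub_apply,
      ContinuousLinearMap.id_apply, neg_sub]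
    exact le_refl _
  · -- least upper bound
    intro S _ hS2 x hx
    have := hS2 x hx
    simp only [ContinuousLinearMap.neg_apply, ContinuousLinearMap.sub_apply,
      ContinuousLinearMap.id_apply, neg_sub] at this ⊢
    exact this
  · -- convergence
    intro x
    have h1 : Filter.Tendsto (fun n => x - P n x) Filter.atTop (nhds 0) := by
      have := (hconv x).const_sub x
      simpa [hPapply] using this
    have h2 : Filter.Tendsto (fun n => ‖x - P n x‖) Filter.atTop (nhds ‖(0 : G)‖) :=
      h1.norm
    simpa [ContinuousLinearMap.sub_apply] using h2
end

section
/- Let E be a reflexive Banach lattice whose order is given by a basis (or alternatively let F have order continuous norm with order given by a basis), with F Dedekind complete. If the unit ball of the positive compact operators from E to F is sequentially closed in the absolute strong operator topology, then every positive operator T: E → F is compact. -/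
open Filter Topology NormedSpace

section Aux

open Filter Topology

variable {G : Type*} [NormedAddCommGroup G] [Lattice G] [HasSolidNorm G] [IsOrderedAddMonoid G] [NormedSpace ℝ G]

private lemma aux_nsmul_semiclosed {z : G} (k : ℕ) (h : 0 ≤ (2 ^ k : ℕ) • z) : 0 ≤ z := by
  induction k generalizing z with
  | zero => simpa using h
  | succ k ih =>
    have h2 : 0 ≤ (2 ^ k : ℕ) • (2 • z) := by
      rwa [← mul_smul, ← pow_succ]
    exact nsmul_two_semiclosed (ih h2)

private lemma aux_smul_nonneg_s12 {y : G} (hy : 0 ≤ y) {t : ℝ} (ht : 0 ≤ t) : 0 ≤ t • y := by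
  have hq : ∀ k : ℕ, 0 ≤ ((⌊t * 2 ^ k⌋₊ : ℝ) / 2 ^ k) • y := by
    intro k
    apply aux_nsmul_semiclosed k
    have h1 : (2 ^ k : ℕ) • (((⌊t * 2 ^ k⌋₊ : ℝ) / 2 ^ k) • y) = (⌊t * 2 ^ k⌋₊ : ℕ) • y := by
      rw [← Nat.cast_smul_eq_nsmul ℝ, ← Nat.cast_smul_eq_nsmul ℝ (⌊t * 2 ^ k⌋₊), smul_smul]
      congr 1
      push_cast
      field_simp
    rw [h1]
    exact nsmul_nonneg hy _
  have hlim : Tendsto (fun k : ℕ => ((⌊t * 2 ^ k⌋₊ : ℝ) / 2 ^ k)) atTop (𝓝 t) := by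
    have hup : ∀ k : ℕ, ((⌊t * 2 ^ k⌋₊ : ℝ) / 2 ^ k) ≤ t := by
      intro k
      rw [div_le_iff₀ (by positivity)]
      exact Nat.floor_le (by positivity)
    have hlo : ∀ k : ℕ, t - (1 / 2) ^ k ≤ ((⌊t * 2 ^ k⌋₊ : ℝ) / 2 ^ k) := by
      intro k
      rw [sub_le_iff_le_add, div_add' _ _ _ (by positivity), le_div_iff₀ (by positivity)]
      have := (Nat.lt_floor_add_one (t * 2 ^ k)).le
      have h2 : (1 / 2 : ℝ) ^ k * 2 ^ k = 1 := by
        rw [← mul_pow]; norm_num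
      nlinarith [this]
    have hl : Tendsto (fun k : ℕ => t - (1 / 2 : ℝ) ^ k) atTop (𝓝 t) := by
      have := tendsto_pow_atTop_nhds_zero_of_lt_one (by norm_num : (0:ℝ) ≤ 1/2)
        (by norm_num : (1/2 : ℝ) < 1)
      simpa using (tendsto_const_nhds (x := t) (f := atTop)).sub this
    exact tendsto_of_tendsto_of_tendsto_of_le_of_le hl tendsto_const_nhds hlo hup
  have hlim2 : Tendsto (fun k : ℕ => ((⌊t * 2 ^ k⌋₊ : ℝ) / 2 ^ k) • y) atTop (𝓝 (t • y)) :=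
    hlim.smul_const y
  exact isClosed_nonneg.mem_of_tendsto hlim2 (Filter.Eventually.of_forall hq)

private lemma aux_compact_smulRight {E F : Type*} [NormedAddCommGroup E] [NormedSpace ℝ E]
    [NormedAddCommGroup F] [NormedSpace ℝ F] (c : E →L[ℝ] ℝ) (v : F) :
    IsCompactOperator (c.smulRight v) := by
  have h1 : IsCompactOperator (fun t : ℝ => t • v) := by
    refine ⟨(fun t : ℝ => t • v) '' Set.Icc (-1) 1,
      isCompact_Icc.image (by fun_prop), ?_⟩
    exact Filter.mem_of_superset (Icc_mem_nhds (by norm_num) (by norm_num))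
      (fun t ht => Set.mem_image_of_mem _ ht)
  have h2 := h1.comp_clm c
  have h3 : ⇑(c.smulRight v) = (fun t : ℝ => t • v) ∘ ⇑c := by
    ext x; simp
  rwa [h3]

private lemma aux_compact_sum {E F : Type*} [NormedAddCommGroup E] [NormedSpace ℝ E]
    [NormedAddCommGroup F] [NormedSpace ℝ F] {ι : Type*} (s : Finset ι) (f : ι → E →L[ℝ] F)
    (h : ∀ i ∈ s, IsCompactOperator (f i)) : IsCompactOperator (∑ i ∈ s, f i) := by
  classical
  induction s using Finset.induction_on with
  | empty =>
    have : IsCompactOperator (fun _ : E => (0 : F)) := isCompactOperator_zero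
    rw [Finset.sum_empty]; exact this
  | insert a s ha ih =>
    rw [Finset.sum_insert ha]
    have h1 := h _ (Finset.mem_insert_self _ _)
    have h2 := ih (fun i hi => h i (Finset.mem_insert_of_mem hi))
    have := h1.add h2
    simpa using this

private lemma aux_basis_nonneg {b : ℕ → G} {c : ℕ → G →L[ℝ] ℝ} (h : OrderBasis b c) (i : ℕ) :
    0 ≤ b i :=
  (h.2.2 (b i)).2 fun n => by rw [h.2.1]; split <;> norm_num

private lemma aux_basis_partial {b : ℕ → G} {c : ℕ → G →L[ℝ] ℝ} (h : OrderBasis b c) {y : G}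
    (hy : 0 ≤ y) (N : ℕ) :
    0 ≤ ∑ i ∈ Finset.range N, c i y • b i ∧ (∑ i ∈ Finset.range N, c i y • b i) ≤ y := by
  obtain ⟨h1, h2, h3⟩ := h
  have key : ∀ n, c n (∑ i ∈ Finset.range N, c i y • b i)
      = if n ∈ Finset.range N then c n y else 0 := by
    intro n
    rw [map_sum]
    have he : ∀ i ∈ Finset.range N, c n (c i y • b i) = if n = i then c i y else 0 := by
      intro i _
      rw [map_smul, smul_eq_mul, h2]
      split <;> simp_all
    rw [Finset.sum_congr rfl he, Finset.sum_ite_eq]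
  have hcy : ∀ n, 0 ≤ c n y := (h3 y).1 hy
  constructor
  · refine (h3 _).2 fun n => ?_
    rw [key]
    split
    · exact hcy n
    · exact le_refl 0
  · rw [← sub_nonneg]
    refine (h3 _).2 fun n => ?_
    rw [map_sub, key]
    split
    · simp
    · simpa using hcy n

end Aux

/-- Let `E` be a reflexive Banach lattice and `F` a Dedekind complete Banach lattice, such
that the order of `E` is given by a basis, or `F` has order continuous norm with order given
by a basis.  If the unit ball of the positive compact operators is sequentially closed in
the absolute strong operator topology, then every positive operator `E → F` is compact. -/
theorem posOp_compact_of_ball_absSOT_seqClosed {E F : Type*}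
    [NormedAddCommGroup E] [Lattice E] [HasSolidNorm E] [IsOrderedAddMonoid E] [NormedSpace ℝ E] [CompleteSpace E]
    [NormedAddCommGroup F] [Lattice F] [HasSolidNorm F] [IsOrderedAddMonoid F] [NormedSpace ℝ F] [CompleteSpace F]
    (hrefl : Function.Surjective (inclusionInDoubleDual ℝ E))
    (hDed : ∀ A : Set F, A.Nonempty → BddAbove A → ∃ u : F, IsLUB A u)
    (hbasis : (∃ (b : ℕ → E) (c : ℕ → E →L[ℝ] ℝ), OrderBasis b c) ∨
      (OrderContNorm F ∧ ∃ (b : ℕ → F) (c : ℕ → F →L[ℝ] ℝ), OrderBasis b c))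
    (hclosed : ∀ (Tn : ℕ → E →L[ℝ] F) (T : E →L[ℝ] F) (m : ℕ → E →L[ℝ] F),
      (∀ n, IsPosOp (Tn n) ∧ IsCompactOperator (Tn n) ∧ ‖Tn n‖ ≤ 1) →
      (∀ n, IsModulus (Tn n - T) (m n)) →
      (∀ x : E, 0 ≤ x → Tendsto (fun n => ‖m n x‖) atTop (𝓝 0)) →
      IsPosOp T ∧ IsCompactOperator T ∧ ‖T‖ ≤ 1) :
    ∀ T : E →L[ℝ] F, IsPosOp T → IsCompactOperator T := by
  intro T hT
  -- Step 1: construct a sequence of compact positive operators `S n ≤ T` converging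
  -- strongly to `T`.
  obtain ⟨S, hScpt, hSpos, hSle, hSlim⟩ :
      ∃ S : ℕ → E →L[ℝ] F, (∀ n, IsCompactOperator (S n)) ∧ (∀ n, IsPosOp (S n)) ∧
        (∀ n, OpLe (S n) T) ∧ (∀ x : E, Tendsto (fun n => S n x) atTop (𝓝 (T x))) := by
    rcases hbasis with ⟨b, c, hb⟩ | ⟨-, b, c, hb⟩
    · refine ⟨fun N => ∑ i ∈ Finset.range N, (c i).smulRight (T (b i)), ?_, ?_, ?_, ?_⟩
      · intro N
        have hco : ⇑(∑ i ∈ Finset.range N, (c i).smulRight (T (b i)))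
            = ∑ i ∈ Finset.range N, ⇑((c i).smulRight (T (b i))) := by
          ext x; simp
        show IsCompactOperator ⇑(∑ i ∈ Finset.range N, (c i).smulRight (T (b i)))
        rw [hco]
        exact aux_compact_sum _ _ fun i _ => aux_compact_smulRight (c i) (T (b i))
      · intro N x hx
        simp only [ContinuousLinearMap.coe_sum', Finset.sum_apply,
          ContinuousLinearMap.smulRight_apply]
        refine Finset.sum_nonneg fun i _ => ?_
        exact aux_smul_nonneg_s12 (hT _ (aux_basis_nonneg hb i)) ((hb.2.2 x).1 hx i)
      · intro N x hx
        have hkey : (∑ i ∈ Finset.range N, (c i).smulRight (T (b i))) x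
            = T (∑ i ∈ Finset.range N, c i x • b i) := by
          simp [map_sum, map_smul]
        rw [hkey]
        have hle := (aux_basis_partial hb hx N).2
        have := hT _ (sub_nonneg.2 hle)
        rw [map_sub] at this
        exact sub_nonneg.1 this
      · intro x
        have hkey : ∀ N, (∑ i ∈ Finset.range N, (c i).smulRight (T (b i))) x
            = T (∑ i ∈ Finset.range N, c i x • b i) := by
          intro N; simp [map_sum, map_smul]
        simp only [hkey]
        exact (T.continuous.tendsto x).comp (hb.1 x)
    · refine ⟨fun N => ∑ i ∈ Finset.range N, ((c i).comp T).smulRight (b i), ?_, ?_, ?_, ?_⟩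
      · intro N
        have hco : ⇑(∑ i ∈ Finset.range N, ((c i).comp T).smulRight (b i))
            = ∑ i ∈ Finset.range N, ⇑(((c i).comp T).smulRight (b i)) := by
          ext x; simp
        show IsCompactOperator ⇑(∑ i ∈ Finset.range N, ((c i).comp T).smulRight (b i))
        rw [hco]
        exact aux_compact_sum _ _ fun i _ => aux_compact_smulRight ((c i).comp T) (b i)
      · intro N x hx
        have hkey : (∑ i ∈ Finset.range N, ((c i).comp T).smulRight (b i)) x
            = ∑ i ∈ Finset.range N, c i (T x) • b i := by simp
        rw [hkey]
        exact (aux_basis_partial hb (hT x hx) N).1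
      · intro N x hx
        have hkey : (∑ i ∈ Finset.range N, ((c i).comp T).smulRight (b i)) x
            = ∑ i ∈ Finset.range N, c i (T x) • b i := by simp
        rw [hkey]
        exact (aux_basis_partial hb (hT x hx) N).2
      · intro x
        have hkey : ∀ N, (∑ i ∈ Finset.range N, ((c i).comp T).smulRight (b i)) x
            = ∑ i ∈ Finset.range N, c i (T x) • b i := by intro N; simp
        simp only [hkey]
        exact hb.1 (T x)
  -- Step 2: uniform bound on `‖S n‖` via Banach–Steinhaus.
  obtain ⟨C, hC⟩ : ∃ C, ∀ n, ‖S n‖ ≤ C := by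
    apply banach_steinhaus
    intro x
    have hbd : BddAbove (Set.range fun n => ‖S n x‖) := ((hSlim x).norm).bddAbove_range
    obtain ⟨M, hM⟩ := hbd
    exact ⟨M, fun n => hM (Set.mem_range_self n)⟩
  set C' : ℝ := max C 1 with hC'def
  have hC'pos : 0 < C' := lt_of_lt_of_le one_pos (le_max_right C 1)
  have hC'inv : (0:ℝ) ≤ C'⁻¹ := inv_nonneg.2 hC'pos.le
  -- Step 3: apply the closedness hypothesis to the scaled sequence.
  have happ := hclosed (fun n => C'⁻¹ • S n) (C'⁻¹ • T) (fun n => C'⁻¹ • (T - S n)) ?_ ?_ ?_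
  · obtain ⟨-, hcpt, -⟩ := happ
    have h1 : IsCompactOperator (C' • ⇑(C'⁻¹ • T)) := hcpt.smul C'
    have h2 : ⇑T = C' • ⇑(C'⁻¹ • T) := by
      funext x
      simp [smul_smul, mul_inv_cancel₀ hC'pos.ne']
    rwa [h2]
  · intro n
    refine ⟨?_, ?_, ?_⟩
    · intro x hx
      simp only [ContinuousLinearMap.coe_smul', Pi.smul_apply]
      exact aux_smul_nonneg_s12 (hSpos n x hx) hC'inv
    · have : ⇑(C'⁻¹ • S n) = C'⁻¹ • ⇑(S n) := rfl
      rw [this]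
      exact (hScpt n).smul _
    · show ‖C'⁻¹ • S n‖ ≤ 1
      calc ‖C'⁻¹ • S n‖ ≤ ‖(C'⁻¹ : ℝ)‖ * ‖S n‖ := ContinuousLinearMap.opNorm_smul_le _ _
        _ = C'⁻¹ * ‖S n‖ := by rw [Real.norm_eq_abs, abs_of_nonneg hC'inv]
        _ ≤ C'⁻¹ * C' := by
            apply mul_le_mul_of_nonneg_left _ hC'inv
            exact le_trans (hC n) (le_max_left C 1)
        _ = 1 := inv_mul_cancel₀ hC'pos.ne'
  · intro n
    have hdnn : ∀ x : E, 0 ≤ x → 0 ≤ (C'⁻¹ • (T - S n)) x := by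
      intro x hx
      simp only [ContinuousLinearMap.coe_smul', Pi.smul_apply,
        ContinuousLinearMap.coe_sub', Pi.sub_apply]
      exact aux_smul_nonneg_s12 (sub_nonneg.2 (hSle n x hx)) hC'inv
    have heq : (C'⁻¹ • S n - C'⁻¹ • T) = -(C'⁻¹ • (T - S n)) := by
      ext x
      simp [smul_sub]
    refine ⟨?_, ?_, ?_⟩
    · intro x hx
      rw [heq]
      simp only [ContinuousLinearMap.neg_apply]
      exact neg_le_self (hdnn x hx)
    · intro x hx
      rw [heq, neg_neg]
    · intro S' _ hS2 x hx
      have := hS2 x hx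
      rwa [heq, neg_neg] at this
  · intro x hx
    rw [← tendsto_zero_iff_norm_tendsto_zero]
    have h0 : Tendsto (fun n => T x - S n x) atTop (𝓝 0) := by
      have := (tendsto_const_nhds (x := T x) (f := atTop)).sub (hSlim x)
      simpa using this
    have h1 : Tendsto (fun n => C'⁻¹ • (T x - S n x)) atTop (𝓝 (C'⁻¹ • (0:F))) :=
      h0.const_smul _
    simpa using h1
end

section
/- If F is a Banach lattice with the positive Schur property and E is a Banach lattice whose closed unit ball is sequentially compact in the absolute weak topology |σ|(E,E*), then the pair (E, F) has the positive weak maximizing property. -/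
open Filter Topology NormedSpace

/-- A sequence is weakly null. -/
def WeaklyNullSeq {X : Type*} [NormedAddCommGroup X] [NormedSpace ℝ X]
    (x : ℕ → X) : Prop :=
  ∀ f : X →L[ℝ] ℝ, Filter.Tendsto (fun n => f (x n)) Filter.atTop (nhds 0)

/-- The pair `(E, F)` has the positive weak maximizing property: every positive operator
`T : E → F` admitting a non-weakly-null maximizing sequence of positive norm-one vectors
attains its norm. -/
def WMPpos (E F : Type*) [NormedAddCommGroup E] [Lattice E] [HasSolidNorm E] [IsOrderedAddMonoid E] [NormedSpace ℝ E]
    [NormedAddCommGroup F] [Lattice F] [HasSolidNorm F] [IsOrderedAddMonoid F] [NormedSpace ℝ F] : Prop :=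
  ∀ T : E →L[ℝ] F, IsPosOp T →
    (∃ x : ℕ → E, (∀ n, 0 ≤ x n ∧ ‖x n‖ = 1) ∧
      Filter.Tendsto (fun n => ‖T (x n)‖) Filter.atTop (nhds ‖T‖) ∧ ¬ WeaklyNullSeq x) →
    ∃ x : E, ‖x‖ = 1 ∧ ‖T x‖ = ‖T‖

/-- If `F` has the positive Schur property and the unit ball of `E` is sequentially compact
in the absolute weak topology (every sequence in the ball has a subsequence `x_{φ(k)}` with
`|x_{φ(k)} - z| → 0` weakly for some `z` in the ball), then `(E, F)` has the positive weak
maximizing property. -/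
theorem WMPpos_of_positiveSchur {E F : Type*}
    [NormedAddCommGroup E] [Lattice E] [HasSolidNorm E] [IsOrderedAddMonoid E] [NormedSpace ℝ E] [CompleteSpace E]
    [NormedAddCommGroup F] [Lattice F] [HasSolidNorm F] [IsOrderedAddMonoid F] [NormedSpace ℝ F] [CompleteSpace F]
    (hSchur : ∀ y : ℕ → F, (∀ n, 0 ≤ y n) → WeaklyNullSeq y →
      Filter.Tendsto (fun n => ‖y n‖) Filter.atTop (nhds 0))
    (hball : ∀ x : ℕ → E, (∀ n, ‖x n‖ ≤ 1) → ∃ z : E, ‖z‖ ≤ 1 ∧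
      ∃ φ : ℕ → ℕ, StrictMono φ ∧ WeaklyNullSeq (fun k => |x (φ k) - z|)) :
    WMPpos E F := by
  intro T hT hx
  obtain ⟨x, hx1, hmax, -⟩ := hx
  by_cases hN : ‖T‖ = 0
  · refine ⟨x 0, (hx1 0).2, le_antisymm ?_ (hN ▸ norm_nonneg _)⟩
    calc ‖T (x 0)‖ ≤ ‖T‖ * ‖x 0‖ := T.le_opNorm _
      _ = ‖T‖ := by rw [(hx1 0).2, mul_one]
  · obtain ⟨z, hz, φ, hφ, hw⟩ := hball x (fun n => (hx1 n).2.le)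
    -- T is monotone
    have hmono : ∀ a b : E, a ≤ b → T a ≤ T b := by
      intro a b hab
      have := hT (b - a) (sub_nonneg.2 hab)
      simpa [sub_nonneg] using this
    -- |T a| ≤ T |a|
    have habs : ∀ a : E, |T a| ≤ T |a| := by
      intro a
      refine sup_le (hmono _ _ (le_abs_self a)) ?_
      have := hmono _ _ (neg_le_abs a)
      simpa using this
    -- the sequence T |x (φ k) - z| is positive and weakly null
    have hpos : ∀ k, (0:F) ≤ T |x (φ k) - z| := fun k => hT _ (abs_nonneg _)
    have hwn : WeaklyNullSeq (fun k => T |x (φ k) - z|) := by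
      intro h
      exact hw (h.comp T)
    have hnull : Tendsto (fun k => ‖T |x (φ k) - z|‖) atTop (𝓝 0) :=
      hSchur _ hpos hwn
    -- hence T (x (φ k)) → T z in norm
    have hle : ∀ k, ‖T (x (φ k)) - T z‖ ≤ ‖T |x (φ k) - z|‖ := by
      intro k
      apply HasSolidNorm.solid
      rw [abs_of_nonneg (hpos k)]
      calc |T (x (φ k)) - T z| = |T (x (φ k) - z)| := by rw [map_sub]
        _ ≤ T |x (φ k) - z| := habs _
    have hTconv : Tendsto (fun k => T (x (φ k))) atTop (𝓝 (T z)) := by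
      rw [tendsto_iff_norm_sub_tendsto_zero]
      exact squeeze_zero (fun k => norm_nonneg _) hle hnull
    have hnormconv : Tendsto (fun k => ‖T (x (φ k))‖) atTop (𝓝 ‖T z‖) :=
      (continuous_norm.tendsto _).comp hTconv
    have hmax' : Tendsto (fun k => ‖T (x (φ k))‖) atTop (𝓝 ‖T‖) :=
      hmax.comp hφ.tendsto_atTop
    have hTz : ‖T z‖ = ‖T‖ := tendsto_nhds_unique hnormconv hmax'
    have hTpos : 0 < ‖T‖ := lt_of_le_of_ne (norm_nonneg _) (Ne.symm hN)
    have hz1 : ‖z‖ = 1 := by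
      refine le_antisymm hz ?_
      by_contra hc
      push_neg at hc
      have : ‖T z‖ ≤ ‖T‖ * ‖z‖ := T.le_opNorm _
      rw [hTz] at this
      nlinarith
    exact ⟨z, hz1, hTz⟩
end
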